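/- arXiv:1601.03889 — 5 statements merged into one kernel-verified Lean document; each statement's English description precedes it below -/
import Mathlib

section
/- Let B, C⁻, C⁺ > 0 with C⁻ ≤ C⁺. Let v ∈ L²(ℝ) with ‖v‖_{L²} ≤ B and let ξ : ℝ → ℝ be measurable with C⁻ ≤ ξ(Y) ≤ C⁺ for a.e. Y. Define g(z) = min{1, e^{(C⁻/2)(B²/2 − |z|)}}. Then ‖g‖_{L¹(ℝ)} = B² + 4/C⁻, and for every q ≥ 1 and every f ∈ L^q(ℝ): ‖Y ↦ ∫_ℝ exp(−|∫_Y^{Y'} cos²(v(s)/2) ξ(s) ds|) f(Y') dY'‖_{L^q} ≤ ‖g‖_{L¹} · ‖f‖_{L^q}. -/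
open MeasureTheory Real

open MeasureTheory Real Set
open scoped ENNReal

lemma aux_exp_abs_int {c : ℝ} (hc : 0 < c) :
    Integrable (fun z : ℝ => exp (-(c * |z|))) := by
  have h1 : IntegrableOn (fun z : ℝ => exp (-(c * |z|))) (Ioi 0) := by
    refine (exp_neg_integrableOn_Ioi 0 hc).congr_fun (fun z hz => ?_) measurableSet_Ioi
    rw [abs_of_pos hz]; simp only [neg_mul]
  have hu : Integrable ((Ioi (0:ℝ)).indicator fun z : ℝ => exp (-(c * |z|))) :=
    h1.integrable_indicator measurableSet_Ioi
  have hu2 : Integrable (fun z : ℝ =>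
      ((Ioi (0:ℝ)).indicator fun z : ℝ => exp (-(c * |z|))) (-z)) := hu.comp_neg
  refine ((hu.add hu2).congr ?_)
  have h0 : ({(0:ℝ)} : Set ℝ)ᶜ ∈ ae (volume : Measure ℝ) := by
    rw [compl_mem_ae_iff]; simp
  filter_upwards [h0] with z hz
  simp only [mem_compl_iff, mem_singleton_iff] at hz
  rcases lt_trichotomy z 0 with h | h | h
  · simp [indicator, h, not_lt.mpr h.le, abs_neg]
  · exact absurd h hz
  · simp [indicator, h, not_lt.mpr h.le, abs_neg]

lemma aux_exp_Ioi {c : ℝ} (hc : 0 < c) (R : ℝ) :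
    ∫ t in Ioi R, exp (-(c * t)) = exp (-(c * R)) / c := by
  have hderiv : ∀ x ∈ Ici R, HasDerivAt (fun t => -exp (-(c * t)) / c) (exp (-(c * x))) x := by
    intro x _
    have h1 : HasDerivAt (fun t : ℝ => -(c * t)) (-c) x := by
      simpa using ((hasDerivAt_id x).const_mul (-c))
    have := (h1.exp).neg.div_const c
    refine this.congr_deriv ?_
    field_simp
  have hint : IntegrableOn (fun x : ℝ => exp (-(c * x))) (Ioi R) := by
    simpa [neg_mul] using exp_neg_integrableOn_Ioi R hc
  have htend : Filter.Tendsto (fun t => -exp (-(c * t)) / c) Filter.atTop (nhds 0) := by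
    have h2 : Filter.Tendsto (fun t : ℝ => -(c * t)) Filter.atTop Filter.atBot := by
      have := Filter.Tendsto.const_mul_atTop hc Filter.tendsto_id
      exact Filter.tendsto_neg_atBot_iff.mpr this
    have h3 := (Real.tendsto_exp_atBot.comp h2).neg.div_const c
    simpa using h3
  have := integral_Ioi_of_hasDerivAt_of_tendsto' hderiv hint htend
  rw [this]
  field_simp
  ring

lemma aux_g (c R : ℝ) (hc : 0 < c) (hR : 0 < R) :
    Integrable (fun z : ℝ => min 1 (exp (c * (R - |z|)))) ∧
    ∫ z : ℝ, min 1 (exp (c * (R - |z|))) = 2 * R + 2 / c := by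
  have hcont2 : Continuous fun t : ℝ => min 1 (exp (c * (R - t))) :=
    continuous_const.min (Real.continuous_exp.comp
      (continuous_const.mul (continuous_const.sub continuous_id)))
  have hcont : Continuous fun z : ℝ => min 1 (exp (c * (R - |z|))) :=
    hcont2.comp continuous_abs
  have hbound : ∀ z : ℝ, min 1 (exp (c * (R - |z|))) ≤ exp (c * R) * exp (-(c * |z|)) := by
    intro z
    rw [← Real.exp_add]
    exact (min_le_right _ _).trans (le_of_eq (by ring_nf))
  have hint : Integrable (fun z : ℝ => min 1 (exp (c * (R - |z|)))) := by
    refine Integrable.mono' ((aux_exp_abs_int hc).const_mul (exp (c * R)))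
      hcont.aestronglyMeasurable ?_
    filter_upwards with z
    rw [norm_of_nonneg (le_min one_pos.le (exp_pos _).le)]
    exact hbound z
  refine ⟨hint, ?_⟩
  rw [integral_comp_abs (f := fun t => min 1 (exp (c * (R - t))))]
  have hsplit : Ioc 0 R ∪ Ioi R = Ioi (0:ℝ) := Ioc_union_Ioi_eq_Ioi hR.le
  have hi1 : ∫ t in Ioc (0:ℝ) R, min 1 (exp (c * (R - t))) = R := by
    rw [setIntegral_congr_fun measurableSet_Ioc (g := fun _ => (1:ℝ))
      (fun t ht => min_eq_left (Real.one_le_exp (by nlinarith [ht.2])))]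
    simp [hR.le]
  have he : ∀ t ∈ Ioi R, min 1 (exp (c * (R - t))) = exp (c * R) * exp (-(c * t)) := by
    intro t ht
    rw [← Real.exp_add, show c * R + -(c * t) = c * (R - t) by ring]
    exact min_eq_right (Real.exp_le_one_iff.mpr (by nlinarith [ht.out]))
  have hi2 : ∫ t in Ioi R, min 1 (exp (c * (R - t))) = 1 / c := by
    rw [setIntegral_congr_fun measurableSet_Ioi he, integral_const_mul, aux_exp_Ioi hc,
      mul_div_assoc', ← Real.exp_add]
    simp
  have hintexp : IntegrableOn (fun t : ℝ => exp (c * R) * exp (-(c * t))) (Ioi R) := by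
    simpa [neg_mul, IntegrableOn] using (exp_neg_integrableOn_Ioi R hc).const_mul (exp (c * R))
  have hint2 : IntegrableOn (fun t => min 1 (exp (c * (R - t)))) (Ioi R) :=
    hintexp.congr_fun (fun t ht => (he t ht).symm) measurableSet_Ioi
  have hint1 : IntegrableOn (fun t => min 1 (exp (c * (R - t)))) (Ioc (0:ℝ) R) :=
    (hcont2.continuousOn.integrableOn_compact isCompact_Icc).mono_set Ioc_subset_Icc_self
  rw [← hsplit, setIntegral_union (Ioc_disjoint_Ioi le_rfl) measurableSet_Ioi hint1 hint2,
    hi1, hi2]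
  ring

lemma aux_lint_sub_left (G₀ : ℝ → ℝ≥0∞) (Y : ℝ) :
    (∫⁻ a : ℝ, G₀ (Y - a)) = ∫⁻ z : ℝ, G₀ z := by
  calc ∫⁻ a : ℝ, G₀ (Y - a) = ∫⁻ a : ℝ, G₀ (Y + a) := by
        simp_rw [sub_eq_add_neg]
        conv_rhs => rw [← Measure.map_neg_eq_self (volume : Measure ℝ)]
        exact (lintegral_map_equiv (fun a => G₀ (Y + a)) (MeasurableEquiv.neg ℝ)).symm
    _ = ∫⁻ z : ℝ, G₀ z := lintegral_add_left_eq_self G₀ Y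

open ENNReal in
lemma aux_schur (G₀ F : ℝ → ℝ≥0∞) (hG : Measurable G₀) (hG0 : ∀ z, G₀ z ≠ 0)
    (hGt : ∀ z, G₀ z ≠ ∞) (hF : Measurable F)
    (hA0 : ∫⁻ z, G₀ z ≠ 0) (hAt : ∫⁻ z, G₀ z ≠ ∞) (q : ℝ) (hq : 1 ≤ q) :
    ∫⁻ Y, (∫⁻ Y', G₀ (Y - Y') * F Y') ^ q
      ≤ (∫⁻ z, G₀ z) ^ q * ∫⁻ Y, F Y ^ q := by
  set A := ∫⁻ z, G₀ z with hA
  have hq0 : (0:ℝ) < q := lt_of_lt_of_le one_pos hq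
  have fub : ∀ H : ℝ → ℝ≥0∞, Measurable H →
      ∫⁻ Y, ∫⁻ Y', G₀ (Y - Y') * H Y' = A * ∫⁻ Y', H Y' := by
    intro H hH
    rw [lintegral_lintegral_swap
      (((hG.comp (measurable_fst.sub measurable_snd)).mul (hH.comp measurable_snd))).aemeasurable]
    have : ∀ Y' : ℝ, ∫⁻ Y, G₀ (Y - Y') * H Y' = A * H Y' := by
      intro Y'
      have hm : Measurable fun Y : ℝ => G₀ (Y - Y') := by fun_prop
      rw [lintegral_mul_const _ hm, lintegral_sub_right_eq_self G₀ Y', mul_comm]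
    simp_rw [this]
    rw [lintegral_const_mul _ hH]
  rcases eq_or_lt_of_le hq with hq1 | hq1
  · simp_rw [← hq1, ENNReal.rpow_one]
    exact le_of_eq (fub F hF)
  · -- Hölder
    have hq'c : (Real.conjExponent q).HolderConjugate q :=
      (Real.HolderConjugate.conjExponent hq1).symm
    set q' := Real.conjExponent q with hq'
    have hq'0 : 0 < q' := hq'c.pos
    have key : ∀ Y : ℝ, (∫⁻ Y', G₀ (Y - Y') * F Y') ^ q
        ≤ A ^ (q - 1) * ∫⁻ Y', G₀ (Y - Y') * F Y' ^ q := by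
      intro Y
      have hdecomp : ∀ Y' : ℝ, G₀ (Y - Y') * F Y'
          = (G₀ (Y - Y')) ^ (1/q') * ((G₀ (Y - Y')) ^ (1/q) * F Y') := by
        intro Y'
        rw [← mul_assoc, ← ENNReal.rpow_add _ _ (hG0 _) (hGt _),
          show (1:ℝ)/q' + 1/q = q'⁻¹ + q⁻¹ by rw [one_div, one_div],
          hq'c.inv_add_inv_eq_one, ENNReal.rpow_one]
      have hmY : Measurable fun Y' : ℝ => G₀ (Y - Y') := by fun_prop
      have hold := ENNReal.lintegral_mul_le_Lp_mul_Lq (volume : Measure ℝ) hq'c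
        (f := fun Y' => (G₀ (Y - Y')) ^ (1/q'))
        (g := fun Y' => (G₀ (Y - Y')) ^ (1/q) * F Y')
        (hmY.pow_const _).aemeasurable ((hmY.pow_const _).mul hF).aemeasurable
      replace hold := (lintegral_congr hdecomp).le.trans hold
      have e1 : ∀ Y' : ℝ, ((G₀ (Y - Y')) ^ (1/q')) ^ q' = G₀ (Y - Y') := by
        intro Y'
        rw [← ENNReal.rpow_mul, one_div_mul_cancel hq'0.ne', ENNReal.rpow_one]
      have e2 : ∀ Y' : ℝ, ((G₀ (Y - Y')) ^ (1/q) * F Y') ^ q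
          = G₀ (Y - Y') * F Y' ^ q := by
        intro Y'
        rw [ENNReal.mul_rpow_of_nonneg _ _ hq0.le, ← ENNReal.rpow_mul,
          one_div_mul_cancel hq0.ne', ENNReal.rpow_one]
      simp_rw [e1, e2] at hold
      rw [aux_lint_sub_left G₀ Y] at hold
      calc (∫⁻ Y', G₀ (Y - Y') * F Y') ^ q
          ≤ (A ^ (1/q') * (∫⁻ Y', G₀ (Y - Y') * F Y' ^ q) ^ (1/q)) ^ q :=
            ENNReal.rpow_le_rpow hold hq0.le
        _ = A ^ (q - 1) * ∫⁻ Y', G₀ (Y - Y') * F Y' ^ q := by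
            rw [ENNReal.mul_rpow_of_nonneg _ _ hq0.le, ← ENNReal.rpow_mul,
              ← ENNReal.rpow_mul, one_div_mul_cancel hq0.ne', ENNReal.rpow_one]
            congr 1
            rw [show 1/q' * q = q - 1 by
              rw [hq', Real.conjExponent]
              have h1 : q - 1 ≠ 0 := by nlinarith
              field_simp]
    calc ∫⁻ Y, (∫⁻ Y', G₀ (Y - Y') * F Y') ^ q
        ≤ ∫⁻ Y, A ^ (q - 1) * ∫⁻ Y', G₀ (Y - Y') * F Y' ^ q :=
          lintegral_mono key
      _ = A ^ (q - 1) * ∫⁻ Y, ∫⁻ Y', G₀ (Y - Y') * F Y' ^ q := by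
          rw [lintegral_const_mul]
          exact (((hG.comp (measurable_fst.sub measurable_snd)).mul
            ((hF.comp measurable_snd).pow_const _))).lintegral_prod_right'
      _ = A ^ (q - 1) * (A * ∫⁻ Y, F Y ^ q) := by
          rw [fub _ (hF.pow_const _)]
      _ = A ^ q * ∫⁻ Y, F Y ^ q := by
          rw [← mul_assoc]
          congr 1
          rw [show A ^ (q - 1) * A = A ^ (q - 1) * A ^ (1:ℝ) by rw [ENNReal.rpow_one],
            ← ENNReal.rpow_add _ _ hA0 hAt]
          norm_num

lemma aux_v_sq (B : ℝ) (hB : 0 < B) (v : ℝ → ℝ) (hv : MemLp v 2 (volume : Measure ℝ))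
    (hvB : eLpNorm v 2 (volume : Measure ℝ) ≤ ENNReal.ofReal B) :
    ∫ s : ℝ, (v s) ^ 2 ≤ B ^ 2 := by
  have hsq := hv.integrable_sq
  have hpt : ∀ x : ℝ, ENNReal.ofReal (x ^ 2) = (‖x‖₊ : ℝ≥0∞) ^ (2:ℕ) := by
    intro x
    rw [← enorm_eq_nnnorm, Real.enorm_eq_ofReal_abs, ← ENNReal.ofReal_pow (abs_nonneg x), sq_abs]
  have h2 := eLpNorm_eq_lintegral_rpow_enorm_toReal (p := 2) (μ := (volume : Measure ℝ)) (f := v)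
    two_ne_zero ENNReal.ofNat_ne_top
  rw [h2] at hvB
  simp only [ENNReal.toReal_ofNat] at hvB
  have hvB2 := ENNReal.rpow_le_rpow hvB (by norm_num : (0:ℝ) ≤ 2)
  rw [← ENNReal.rpow_mul] at hvB2
  norm_num at hvB2
  have hlin : (∫⁻ s, ENNReal.ofReal ((v s) ^ 2)) ≤ ENNReal.ofReal (B ^ 2) := by
    calc (∫⁻ s, ENNReal.ofReal ((v s) ^ 2)) = ∫⁻ s, (‖v s‖₊ : ℝ≥0∞) ^ (2:ℕ) := by
          exact lintegral_congr fun s => hpt (v s)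
      _ ≤ ENNReal.ofReal B ^ (2:ℕ) := hvB2
      _ = ENNReal.ofReal (B ^ 2) := (ENNReal.ofReal_pow hB.le 2).symm
  rw [integral_eq_lintegral_of_nonneg_ae (Filter.Eventually.of_forall fun s => sq_nonneg _)
    hsq.aestronglyMeasurable]
  exact ENNReal.toReal_le_of_le_ofReal (sq_nonneg B) hlin

lemma aux_kernel_core (B Cm Cp : ℝ) (hB : 0 < B) (hCm : 0 < Cm) (hCp : 0 < Cp) (hle : Cm ≤ Cp)
    (v ξ : ℝ → ℝ) (hv : MemLp v 2 (volume : Measure ℝ))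
    (hvB : eLpNorm v 2 (volume : Measure ℝ) ≤ ENNReal.ofReal B)
    (hξm : Measurable ξ) (hξ : ∀ᵐ Y : ℝ, ξ Y ∈ Set.Icc Cm Cp) {Y Y' : ℝ} (h : Y ≤ Y') :
    exp (-|∫ s in Y..Y', cos (v s / 2) ^ 2 * ξ s|)
      ≤ min 1 (exp ((Cm / 2) * (B ^ 2 / 2 - |Y - Y'|))) := by
  have hccont : Continuous fun x : ℝ => cos (x / 2) ^ 2 :=
    (Real.continuous_cos.comp (continuous_id.div_const 2)).pow 2
  have hmeas : AEStronglyMeasurable (fun s => cos (v s / 2) ^ 2 * ξ s) (volume : Measure ℝ) :=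
    (hccont.comp_aestronglyMeasurable hv.aestronglyMeasurable).mul hξm.aestronglyMeasurable
  have hfin : volume (Set.Ioc Y Y') < ⊤ := measure_Ioc_lt_top
  have hξ' : ∀ᵐ s ∂(volume.restrict (Set.Ioc Y Y')), ξ s ∈ Set.Icc Cm Cp := ae_restrict_of_ae hξ
  have hint1 : IntegrableOn (fun s => cos (v s / 2) ^ 2 * ξ s) (Set.Ioc Y Y') := by
    refine Integrable.mono'
      ((integrableOn_const hfin.ne) : IntegrableOn (fun _ : ℝ => Cp) _ _)
      hmeas.restrict ?_
    filter_upwards [hξ'] with s hs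
    rw [norm_mul]
    have h1 : ‖cos (v s / 2) ^ 2‖ ≤ 1 := by
      rw [norm_of_nonneg (sq_nonneg _)]; exact Real.cos_sq_le_one _
    have h2 : ‖ξ s‖ ≤ Cp := by
      rw [Real.norm_eq_abs, abs_le]; exact ⟨by linarith [hs.1, hCm.le], hs.2⟩
    calc ‖cos (v s / 2) ^ 2‖ * ‖ξ s‖ ≤ 1 * Cp :=
          mul_le_mul h1 h2 (norm_nonneg _) one_pos.le
      _ = Cp := one_mul Cp
  have hint2 : IntegrableOn (fun s => Cm * cos (v s / 2) ^ 2) (Set.Ioc Y Y') := by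
    refine Integrable.mono'
      ((integrableOn_const hfin.ne) : IntegrableOn (fun _ : ℝ => Cm) _ _)
      ((hccont.comp_aestronglyMeasurable hv.aestronglyMeasurable).const_mul Cm).restrict ?_
    filter_upwards with s
    rw [norm_mul, Real.norm_eq_abs, abs_of_pos hCm, Real.norm_eq_abs, abs_of_nonneg (sq_nonneg _)]
    nlinarith [Real.cos_sq_le_one (v s / 2), hCm.le]
  have hsin_int : IntegrableOn (fun s => sin (v s / 2) ^ 2) (Set.Ioc Y Y') := by
    refine Integrable.mono'
      ((integrableOn_const hfin.ne) : IntegrableOn (fun _ : ℝ => (1:ℝ)) _ _)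
      (((Real.continuous_sin.comp (continuous_id.div_const 2)).pow
        2).comp_aestronglyMeasurable hv.aestronglyMeasurable).restrict ?_
    filter_upwards with s
    rw [Real.norm_eq_abs, abs_of_nonneg (sq_nonneg _)]
    exact Real.sin_sq_le_one _
  have hvsq_int : IntegrableOn (fun s => (v s) ^ 2 / 4) (Set.Ioc Y Y') :=
    (hv.integrable_sq.div_const 4).integrableOn
  have hI1 : ∫ s in Set.Ioc Y Y', Cm * cos (v s / 2) ^ 2
      ≤ ∫ s in Set.Ioc Y Y', cos (v s / 2) ^ 2 * ξ s := by
    refine integral_mono_ae hint2 hint1 ?_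
    filter_upwards [hξ'] with s hs
    nlinarith [sq_nonneg (cos (v s / 2)), hs.1]
  have hsin_le : ∫ s in Set.Ioc Y Y', sin (v s / 2) ^ 2 ≤ B ^ 2 / 4 := by
    calc ∫ s in Set.Ioc Y Y', sin (v s / 2) ^ 2 ≤ ∫ s in Set.Ioc Y Y', (v s) ^ 2 / 4 := by
          refine integral_mono_ae hsin_int hvsq_int ?_
          filter_upwards with s
          have := Real.sin_sq_le_sq (x := v s / 2)
          calc sin (v s / 2) ^ 2 ≤ (v s / 2) ^ 2 := this
            _ = (v s) ^ 2 / 4 := by ring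
      _ ≤ ∫ s : ℝ, (v s) ^ 2 / 4 := by
          refine setIntegral_le_integral (hv.integrable_sq.div_const 4) ?_
          filter_upwards with s
          positivity
      _ = (∫ s : ℝ, (v s) ^ 2) / 4 := by rw [integral_div]
      _ ≤ B ^ 2 / 4 := by linarith [aux_v_sq B hB v hv hvB]
  have hcos_eq : ∫ s in Set.Ioc Y Y', Cm * cos (v s / 2) ^ 2
      = Cm * ((Y' - Y) - ∫ s in Set.Ioc Y Y', sin (v s / 2) ^ 2) := by
    rw [integral_const_mul]
    congr 1
    have : ∀ s ∈ Set.Ioc Y Y', cos (v s / 2) ^ 2 = 1 - sin (v s / 2) ^ 2 := fun s _ =>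
      Real.cos_sq' _
    rw [setIntegral_congr_fun measurableSet_Ioc this, integral_sub
      (integrableOn_const (C := (1:ℝ)) hfin.ne) hsin_int]
    simp [Real.volume_Ioc, ENNReal.toReal_ofReal (sub_nonneg.mpr h), h]
  have hIoc : (∫ s in Y..Y', cos (v s / 2) ^ 2 * ξ s)
      = ∫ s in Set.Ioc Y Y', cos (v s / 2) ^ 2 * ξ s := intervalIntegral.integral_of_le h
  have hI0 : 0 ≤ ∫ s in Set.Ioc Y Y', cos (v s / 2) ^ 2 * ξ s := by
    refine integral_nonneg_of_ae ?_
    filter_upwards [hξ'] with s hs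
    show (0:ℝ) ≤ cos (v s / 2) ^ 2 * ξ s
    nlinarith [sq_nonneg (cos (v s / 2)), hs.1]
  have habs : |Y - Y'| = Y' - Y := by rw [abs_sub_comm, abs_of_nonneg (sub_nonneg.mpr h)]
  rw [hIoc, habs, abs_of_nonneg hI0]
  have hIlow : Cm * ((Y' - Y) - B ^ 2 / 4) ≤ ∫ s in Set.Ioc Y Y', cos (v s / 2) ^ 2 * ξ s := by
    rw [hcos_eq] at hI1
    nlinarith [hCm.le]
  refine le_min (Real.exp_le_one_iff.mpr (by linarith)) (Real.exp_le_exp.mpr ?_)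
  nlinarith [sub_nonneg.mpr h, hCm.le]

lemma aux_kernel (B Cm Cp : ℝ) (hB : 0 < B) (hCm : 0 < Cm) (hCp : 0 < Cp) (hle : Cm ≤ Cp)
    (v ξ : ℝ → ℝ) (hv : MemLp v 2 (volume : Measure ℝ))
    (hvB : eLpNorm v 2 (volume : Measure ℝ) ≤ ENNReal.ofReal B)
    (hξm : Measurable ξ) (hξ : ∀ᵐ Y : ℝ, ξ Y ∈ Set.Icc Cm Cp) (Y Y' : ℝ) :
    exp (-|∫ s in Y..Y', cos (v s / 2) ^ 2 * ξ s|)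
      ≤ min 1 (exp ((Cm / 2) * (B ^ 2 / 2 - |Y - Y'|))) := by
  rcases le_total Y Y' with h | h
  · exact aux_kernel_core B Cm Cp hB hCm hCp hle v ξ hv hvB hξm hξ h
  · rw [intervalIntegral.integral_symm Y' Y, abs_neg, abs_sub_comm]
    exact aux_kernel_core B Cm Cp hB hCm hCp hle v ξ hv hvB hξm hξ h

lemma aux_gnorm (B Cm : ℝ) (hB : 0 < B) (hCm : 0 < Cm) :
    (∫⁻ z : ℝ, ENNReal.ofReal (min 1 (exp ((Cm / 2) * (B ^ 2 / 2 - |z|)))))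
      = ENNReal.ofReal (B ^ 2 + 4 / Cm) := by
  have hg := aux_g (Cm / 2) (B ^ 2 / 2) (by positivity) (by positivity)
  rw [← ofReal_integral_eq_lintegral_ofReal hg.1
    (Filter.Eventually.of_forall fun z => le_min one_pos.le (exp_pos _).le), hg.2]
  congr 1
  field_simp
  ring

lemma aux_main (B Cm Cp : ℝ) (hB : 0 < B) (hCm : 0 < Cm) (hCp : 0 < Cp) (hle : Cm ≤ Cp)
    (v ξ : ℝ → ℝ) (hv : MemLp v 2 (volume : Measure ℝ))
    (hvB : eLpNorm v 2 (volume : Measure ℝ) ≤ ENNReal.ofReal B)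
    (hξm : Measurable ξ) (hξ : ∀ᵐ Y : ℝ, ξ Y ∈ Set.Icc Cm Cp)
    (q : ℝ) (hq : 1 ≤ q) (f : ℝ → ℝ) (hfm : StronglyMeasurable f) :
    eLpNorm (fun Y : ℝ => ∫ Y' : ℝ,
        exp (-|∫ s in Y..Y', cos (v s / 2) ^ 2 * ξ s|) * f Y')
        (ENNReal.ofReal q) (volume : Measure ℝ)
      ≤ ENNReal.ofReal (B ^ 2 + 4 / Cm)
          * eLpNorm f (ENNReal.ofReal q) (volume : Measure ℝ) := by
  have hq0 : (0:ℝ) < q := lt_of_lt_of_le one_pos hq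
  have hp0 : (ENNReal.ofReal q) ≠ 0 := by
    simp only [ne_eq, ENNReal.ofReal_eq_zero, not_le]; linarith
  have hpne : (ENNReal.ofReal q) ≠ ∞ := ENNReal.ofReal_ne_top
  have hptoReal : (ENNReal.ofReal q).toReal = q := ENNReal.toReal_ofReal hq0.le
  set G₀ : ℝ → ℝ≥0∞ := fun z => ENNReal.ofReal (min 1 (exp ((Cm / 2) * (B ^ 2 / 2 - |z|))))
    with hG₀def
  set F : ℝ → ℝ≥0∞ := fun Y => (‖f Y‖₊ : ℝ≥0∞) with hFdef
  have hgcont : Continuous fun z : ℝ => min 1 (exp ((Cm / 2) * (B ^ 2 / 2 - |z|))) :=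
    continuous_const.min (Real.continuous_exp.comp
      (continuous_const.mul (continuous_const.sub continuous_abs)))
  have hGmeas : Measurable G₀ := ENNReal.measurable_ofReal.comp hgcont.measurable
  have hG0 : ∀ z, G₀ z ≠ 0 := fun z => by
    simp only [hG₀def, ne_eq, ENNReal.ofReal_eq_zero, not_le]
    exact lt_min one_pos (exp_pos _)
  have hGt : ∀ z, G₀ z ≠ ∞ := fun z => ENNReal.ofReal_ne_top
  have hFmeas : Measurable F := hfm.measurable.nnnorm.coe_nnreal_ennreal
  have hA : (∫⁻ z : ℝ, G₀ z) = ENNReal.ofReal (B ^ 2 + 4 / Cm) := aux_gnorm B Cm hB hCm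
  have hval_pos : (0:ℝ) < B ^ 2 + 4 / Cm := by positivity
  have hA0 : (∫⁻ z : ℝ, G₀ z) ≠ 0 := by
    rw [hA]; simp only [ne_eq, ENNReal.ofReal_eq_zero, not_le]; exact hval_pos
  have hAt : (∫⁻ z : ℝ, G₀ z) ≠ ∞ := by rw [hA]; exact ENNReal.ofReal_ne_top
  have hpt : ∀ Y : ℝ, (‖∫ Y' : ℝ, exp (-|∫ s in Y..Y', cos (v s / 2) ^ 2 * ξ s|) * f Y'‖₊ : ℝ≥0∞)
      ≤ ∫⁻ Y' : ℝ, G₀ (Y - Y') * F Y' := by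
    intro Y
    refine (enorm_integral_le_lintegral_enorm _).trans (lintegral_mono fun Y' => ?_)
    rw [enorm_mul]
    refine mul_le_mul_left ?_ _
    rw [Real.enorm_eq_ofReal_abs, abs_of_pos (exp_pos _)]
    exact ENNReal.ofReal_le_ofReal
      (aux_kernel B Cm Cp hB hCm hCp hle v ξ hv hvB hξm hξ Y Y')
  calc eLpNorm (fun Y : ℝ => ∫ Y' : ℝ,
        exp (-|∫ s in Y..Y', cos (v s / 2) ^ 2 * ξ s|) * f Y') (ENNReal.ofReal q) volume
      = (∫⁻ Y : ℝ, (‖∫ Y' : ℝ,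
          exp (-|∫ s in Y..Y', cos (v s / 2) ^ 2 * ξ s|) * f Y'‖₊ : ℝ≥0∞) ^ q) ^ (1/q) := by
        rw [eLpNorm_eq_lintegral_rpow_enorm_toReal hp0 hpne, hptoReal]
        rfl
    _ ≤ (∫⁻ Y : ℝ, (∫⁻ Y' : ℝ, G₀ (Y - Y') * F Y') ^ q) ^ (1/q) :=
        ENNReal.rpow_le_rpow
          (lintegral_mono fun Y => ENNReal.rpow_le_rpow (hpt Y) hq0.le) (by positivity)
    _ ≤ ((∫⁻ z : ℝ, G₀ z) ^ q * ∫⁻ Y : ℝ, F Y ^ q) ^ (1/q) :=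
        ENNReal.rpow_le_rpow
          (aux_schur G₀ F hGmeas hG0 hGt hFmeas hA0 hAt q hq) (by positivity)
    _ = (∫⁻ z : ℝ, G₀ z) * (∫⁻ Y : ℝ, F Y ^ q) ^ (1/q) := by
        rw [ENNReal.mul_rpow_of_nonneg _ _ (by positivity), ← ENNReal.rpow_mul,
          mul_one_div_cancel hq0.ne', ENNReal.rpow_one]
    _ = ENNReal.ofReal (B ^ 2 + 4 / Cm) * eLpNorm f (ENNReal.ofReal q) volume := by
        rw [hA, eLpNorm_eq_lintegral_rpow_enorm_toReal hp0 hpne, hptoReal]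
        rfl

/-- The kernel estimate: if `‖v‖_{L²} ≤ B` and `C⁻ ≤ ξ ≤ C⁺` a.e., then with
`g(z) = min{1, exp((C⁻/2)(B²/2 − |z|))}` one has `‖g‖_{L¹} = B² + 4/C⁻`, and for
every `q ≥ 1` and `f ∈ L^q` the operator with kernel
`exp(−|∫_Y^{Y'} cos²(v/2) ξ ds|)` maps `f` to a function with `L^q` norm at most
`‖g‖_{L¹} ‖f‖_{L^q}`. -/
theorem stmt_7 (B Cm Cp : ℝ) (hB : 0 < B) (hCm : 0 < Cm) (hCp : 0 < Cp) (hle : Cm ≤ Cp)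
    (v ξ : ℝ → ℝ)
    (hv : MemLp v 2 (volume : Measure ℝ))
    (hvB : eLpNorm v 2 (volume : Measure ℝ) ≤ ENNReal.ofReal B)
    (hξm : Measurable ξ) (hξ : ∀ᵐ Y : ℝ, ξ Y ∈ Set.Icc Cm Cp) :
    eLpNorm (fun z : ℝ => min 1 (Real.exp ((Cm / 2) * (B ^ 2 / 2 - |z|)))) 1
        (volume : Measure ℝ) = ENNReal.ofReal (B ^ 2 + 4 / Cm) ∧
    ∀ q : ℝ, 1 ≤ q → ∀ f : ℝ → ℝ, MemLp f (ENNReal.ofReal q) (volume : Measure ℝ) →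
      eLpNorm (fun Y : ℝ => ∫ Y' : ℝ,
          Real.exp (-|∫ s in Y..Y', Real.cos (v s / 2) ^ 2 * ξ s|) * f Y')
          (ENNReal.ofReal q) (volume : Measure ℝ)
        ≤ ENNReal.ofReal (B ^ 2 + 4 / Cm)
            * eLpNorm f (ENNReal.ofReal q) (volume : Measure ℝ) := by
  constructor
  · rw [eLpNorm_one_eq_lintegral_enorm]
    have hptw : ∀ z : ℝ, ‖min 1 (exp ((Cm / 2) * (B ^ 2 / 2 - |z|)))‖ₑ
        = ENNReal.ofReal (min 1 (exp ((Cm / 2) * (B ^ 2 / 2 - |z|)))) := fun z => by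
      rw [Real.enorm_eq_ofReal_abs, abs_of_pos (lt_min one_pos (exp_pos _))]
    simp_rw [hptw]
    exact aux_gnorm B Cm hB hCm
  · intro q hq f hf
    have hff' := hf.aestronglyMeasurable.ae_eq_mk
    have e1 : (fun Y : ℝ => ∫ Y' : ℝ,
        exp (-|∫ s in Y..Y', cos (v s / 2) ^ 2 * ξ s|) * f Y')
        = fun Y : ℝ => ∫ Y' : ℝ, exp (-|∫ s in Y..Y', cos (v s / 2) ^ 2 * ξ s|)
            * hf.aestronglyMeasurable.mk f Y' := by
      funext Y
      exact integral_congr_ae (hff'.mono fun Y' hY' => by simp only []; rw [hY'])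
    rw [e1, eLpNorm_congr_ae hff']
    exact aux_main B Cm Cp hB hCm hCp hle v ξ hv hvB hξm hξ q hq _
      hf.aestronglyMeasurable.stronglyMeasurable_mk
end

section
/- Let B, C⁻ > 0. Let v ∈ L²(ℝ) with ‖v‖_{L²} ≤ B and let ξ : ℝ → ℝ be measurable with ξ(z) ≥ C⁻ for a.e. z. Then for all real numbers z₁ < z₂: ∫_{z₁}^{z₂} cos²(v(z)/2) ξ(z) dz ≥ (C⁻/2)·((z₂ − z₁) − B²/2). -/
open MeasureTheory Real

/-- If `‖v‖_{L²} ≤ B` and `ξ ≥ C⁻ > 0` a.e., then for all `z₁ < z₂`,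
`∫_{z₁}^{z₂} cos²(v/2) ξ ≥ (C⁻/2)((z₂ − z₁) − B²/2)` (the integral of the
nonnegative integrand is taken as a lower Lebesgue integral). -/
theorem stmt_9 (B Cm : ℝ) (hB : 0 < B) (hCm : 0 < Cm)
    (v ξ : ℝ → ℝ)
    (hv : MemLp v 2 (volume : Measure ℝ))
    (hvB : eLpNorm v 2 (volume : Measure ℝ) ≤ ENNReal.ofReal B)
    (hξm : Measurable ξ) (hξ : ∀ᵐ z : ℝ, Cm ≤ ξ z) :
    ∀ z₁ z₂ : ℝ, z₁ < z₂ →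
      ENNReal.ofReal ((Cm / 2) * ((z₂ - z₁) - B ^ 2 / 2))
        ≤ ∫⁻ z in Set.Ioc z₁ z₂, ENNReal.ofReal (Real.cos (v z / 2) ^ 2 * ξ z) := by
  intro z₁ z₂ hz
  by_cases hpos : (z₂ - z₁) - B ^ 2 / 2 ≤ 0
  · rw [ENNReal.ofReal_eq_zero.2 (by nlinarith)]
    exact zero_le
  push_neg at hpos
  set A : Set ℝ := (fun x => (‖v x‖₊ : ENNReal)) ⁻¹' Set.Ici (ENNReal.ofReal (π / 2)) with hA
  have hπ : (0:ℝ) < π / 2 := by positivity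
  -- Chebyshev: μ A ≤ ofReal (B^2/2)
  have hcheb : volume A ≤ ENNReal.ofReal (B ^ 2 / 2) := by
    have h := meas_ge_le_mul_pow_eLpNorm_enorm (volume : Measure ℝ) (p := 2) (by norm_num)
      (by norm_num) hv.1 (ε := ENNReal.ofReal (π / 2)) (by simp [hπ]) (by simp)
    have hA' : A = { x | ENNReal.ofReal (π / 2) ≤ (‖v x‖₊ : ENNReal) } := rfl
    rw [hA']
    refine h.trans ?_
    have h2 : ((2 : ENNReal)).toReal = (2:ℝ) := by norm_num
    rw [h2]
    calc (ENNReal.ofReal (π / 2))⁻¹ ^ (2:ℝ) * eLpNorm v 2 volume ^ (2:ℝ)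
        ≤ (ENNReal.ofReal (π / 2))⁻¹ ^ (2:ℝ) * (ENNReal.ofReal B) ^ (2:ℝ) := by
          gcongr
      _ = ENNReal.ofReal ((π / 2)⁻¹ ^ (2:ℝ) * B ^ (2:ℝ)) := by
          rw [← ENNReal.ofReal_inv_of_pos hπ,
            ENNReal.ofReal_rpow_of_pos (by positivity),
            ENNReal.ofReal_rpow_of_pos hB, ← ENNReal.ofReal_mul (by positivity)]
      _ ≤ ENNReal.ofReal (B ^ 2 / 2) := by
          apply ENNReal.ofReal_le_ofReal
          rw [show (2:ℝ) = ((2:ℕ):ℝ) by norm_num, Real.rpow_natCast, Real.rpow_natCast]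
          have hπ3 : (3:ℝ) ≤ π := by
            have := Real.pi_gt_three
            linarith
          have hinv : ((π / 2)⁻¹) ^ (2:ℕ) ≤ (1:ℝ)/2 := by
            rw [inv_pow]
            rw [inv_le_iff_one_le_mul₀ (by positivity)]
            · nlinarith
          calc (π / 2)⁻¹ ^ (2:ℕ) * B ^ (2:ℕ) ≤ (1/2) * B ^ 2 := by
                nlinarith [sq_nonneg B]
            _ = B ^ 2 / 2 := by ring
  have hAnull : NullMeasurableSet A (volume : Measure ℝ) :=
    hv.1.aemeasurable.enorm.nullMeasurable measurableSet_Ici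
  set G : Set ℝ := Set.Ioc z₁ z₂ \ A with hG
  have hGnull : NullMeasurableSet G (volume : Measure ℝ) :=
    measurableSet_Ioc.nullMeasurableSet.diff hAnull
  -- measure of G is large
  have hmeasG : ENNReal.ofReal ((z₂ - z₁) - B ^ 2 / 2) ≤ volume G := by
    have h1 : volume (Set.Ioc z₁ z₂) - volume A ≤ volume G :=
      le_measure_diff
    refine le_trans ?_ h1
    rw [Real.volume_Ioc, ENNReal.ofReal_sub _ (by positivity)]
    exact tsub_le_tsub le_rfl hcheb
  -- pointwise lower bound on G
  have hbound : ∀ᵐ x ∂(volume : Measure ℝ).restrict G,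
      ENNReal.ofReal (Cm / 2) ≤ ENNReal.ofReal (Real.cos (v x / 2) ^ 2 * ξ x) := by
    filter_upwards [ae_restrict_mem₀ hGnull, ae_restrict_of_ae hξ] with x hxG hxξ
    apply ENNReal.ofReal_le_ofReal
    have hxA : ¬ (π / 2 ≤ |v x|) := by
      intro hcon
      apply hxG.2
      show ENNReal.ofReal (π / 2) ≤ (‖v x‖₊ : ENNReal)
      rw [← enorm_eq_nnnorm, ← ofReal_norm]
      exact ENNReal.ofReal_le_ofReal (by rwa [Real.norm_eq_abs])
    push_neg at hxA
    have habs : |v x / 2| ≤ π / 4 := by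
      rw [abs_div]
      rw [abs_of_pos (by norm_num : (0:ℝ) < 2)]
      linarith
    have hcos : Real.sqrt 2 / 2 ≤ Real.cos (v x / 2) := by
      rw [← Real.cos_abs]
      rw [← Real.cos_pi_div_four]
      apply Real.cos_le_cos_of_nonneg_of_le_pi (abs_nonneg _) (by linarith [Real.pi_pos])
        habs
    have h12 : (1:ℝ)/2 ≤ Real.cos (v x / 2) ^ 2 := by
      have h2 : (Real.sqrt 2 / 2) ^ 2 = 1/2 := by
        rw [div_pow, Real.sq_sqrt (by norm_num)]; norm_num
      nlinarith [Real.sqrt_nonneg 2]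
    nlinarith
  calc ENNReal.ofReal ((Cm / 2) * ((z₂ - z₁) - B ^ 2 / 2))
      = ENNReal.ofReal (Cm / 2) * ENNReal.ofReal ((z₂ - z₁) - B ^ 2 / 2) :=
        ENNReal.ofReal_mul (by positivity)
    _ ≤ ENNReal.ofReal (Cm / 2) * volume G := by gcongr
    _ = ∫⁻ _ in G, ENNReal.ofReal (Cm / 2) := (setLIntegral_const G _).symm
    _ ≤ ∫⁻ x in G, ENNReal.ofReal (Real.cos (v x / 2) ^ 2 * ξ x) :=
        lintegral_mono_ae hbound
    _ ≤ ∫⁻ z in Set.Ioc z₁ z₂, ENNReal.ofReal (Real.cos (v z / 2) ^ 2 * ξ z) :=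
        lintegral_mono_set Set.diff_subset
end

section
/- Let B, C⁻, C⁺ > 0 with C⁻ ≤ C⁺, let v ∈ L²(ℝ) with ‖v‖_{L²} ≤ B, let ξ : ℝ → ℝ be measurable with C⁻ ≤ ξ ≤ C⁺ a.e., and let u ∈ L²(ℝ). Set g(z) = min{1, e^{(C⁻/2)(B²/2 − |z|)}} with ‖g‖_{L¹} = B² + 4/C⁻. Define Q(Y) = (1/2)∫_ℝ exp(−|∫_Y^{Y'} cos²(v(s)/2) ξ(s) ds|)·u(Y')cos²(v(Y')/2)·ξ(Y') dY' and Q_x(Y) = (1/2)(∫_Y^{+∞} − ∫_{−∞}^{Y}) of the same integrand. Then ‖Q‖_{L²} ≤ (C⁺/2)·‖g‖_{L¹}·‖u‖_{L²} and ‖Q_x‖_{L²} ≤ C⁺·‖g‖_{L¹}·‖u‖_{L²}. -/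
open MeasureTheory Real Set ENNReal

noncomputable section

/-- `Q(Y)` in the transferred coordinates (at a fixed time). -/
def Qop (v ξ u : ℝ → ℝ) (Y : ℝ) : ℝ :=
  (1 / 2) * ∫ Y' : ℝ,
    Real.exp (-|∫ s in Y..Y', Real.cos (v s / 2) ^ 2 * ξ s|)
      * (u Y' * Real.cos (v Y' / 2) ^ 2 * ξ Y')

/-- `Q_x(Y)` in the transferred coordinates (at a fixed time). -/
def Qxop (v ξ u : ℝ → ℝ) (Y : ℝ) : ℝ :=
  (1 / 2) * ((∫ Y' in Set.Ioi Y,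
      Real.exp (-|∫ s in Y..Y', Real.cos (v s / 2) ^ 2 * ξ s|)
        * (u Y' * Real.cos (v Y' / 2) ^ 2 * ξ Y'))
    - ∫ Y' in Set.Iio Y,
      Real.exp (-|∫ s in Y..Y', Real.cos (v s / 2) ^ 2 * ξ s|)
        * (u Y' * Real.cos (v Y' / 2) ^ 2 * ξ Y'))

/-- Young-type L¹⋆L² → L² bound, entirely in ℝ≥0∞. -/
lemma conv_L2_bound (G : ℝ → ℝ≥0∞) (hG : Measurable G) (h : ℝ → ℝ≥0∞)
    (hh : AEMeasurable h (volume : Measure ℝ)) :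
    (∫⁻ Y : ℝ, (∫⁻ Y' : ℝ, G (Y - Y') * h Y') ^ (2:ℝ)) ^ (1/2 : ℝ)
      ≤ (∫⁻ z, G z) * (∫⁻ Y' : ℝ, (h Y') ^ (2:ℝ)) ^ (1/2:ℝ) := by
  obtain ⟨h', hm, heq⟩ := hh
  have e1 : ∀ Y : ℝ, ∫⁻ Y', G (Y - Y') * h Y' = ∫⁻ Y', G (Y - Y') * h' Y' :=
    fun Y => lintegral_congr_ae (heq.mono fun Y' hY' => by simp only []; rw [hY'])
  have e2 : ∫⁻ Y' : ℝ, (h Y') ^ (2:ℝ) = ∫⁻ Y' : ℝ, (h' Y') ^ (2:ℝ) :=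
    lintegral_congr_ae (heq.mono fun a ha => by dsimp only; rw [ha])
  simp_rw [e1, e2]
  clear e1 e2 heq
  set IG := ∫⁻ z, G z with hIG
  have hGsub : ∀ Y : ℝ, ∫⁻ Y', G (Y - Y') = IG := fun Y =>
    (Measure.measurePreserving_sub_left (volume : Measure ℝ) Y).lintegral_comp hG
  have hGsub' : ∀ Y' : ℝ, ∫⁻ Y, G (Y - Y') = IG := fun Y' =>
    (measurePreserving_sub_right (volume : Measure ℝ) Y').lintegral_comp hG
  have step2 : ∀ Y : ℝ, (∫⁻ Y', G (Y - Y') * h' Y') ^ (2:ℝ)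
      ≤ IG * ∫⁻ Y', G (Y - Y') * (h' Y') ^ (2:ℝ) := by
    intro Y
    have cs := ENNReal.lintegral_mul_le_Lp_mul_Lq (volume : Measure ℝ)
      (Real.HolderConjugate.two_two : Real.HolderConjugate 2 2)
      (f := fun Y' => (G (Y - Y')) ^ (1/2:ℝ))
      (g := fun Y' => (G (Y - Y')) ^ (1/2:ℝ) * h' Y')
      ((hG.comp (measurable_const.sub measurable_id)).pow_const _).aemeasurable
      (((hG.comp (measurable_const.sub measurable_id)).pow_const _).mul hm).aemeasurable
    have key1 : ∀ Y' : ℝ, ((G (Y - Y')) ^ (1/2:ℝ)) * ((G (Y - Y')) ^ (1/2:ℝ) * h' Y')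
        = G (Y - Y') * h' Y' := by
      intro Y'
      rw [← mul_assoc, ← ENNReal.rpow_add_of_nonneg _ _ (by norm_num) (by norm_num)]
      norm_num
    have key2 : ∀ Y' : ℝ, ((G (Y - Y')) ^ (1/2:ℝ)) ^ (2:ℝ) = G (Y - Y') := by
      intro Y'
      rw [← ENNReal.rpow_mul]
      norm_num
    have key3 : ∀ Y' : ℝ, ((G (Y - Y')) ^ (1/2:ℝ) * h' Y') ^ (2:ℝ)
        = G (Y - Y') * (h' Y') ^ (2:ℝ) := by
      intro Y'
      rw [ENNReal.mul_rpow_of_nonneg _ _ (by norm_num), key2]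
    simp only [Pi.mul_apply, key1] at cs
    calc (∫⁻ Y', G (Y - Y') * h' Y') ^ (2:ℝ)
        ≤ ((∫⁻ Y', ((G (Y - Y')) ^ (1/2:ℝ)) ^ (2:ℝ)) ^ (1/(2:ℝ))
            * (∫⁻ Y', ((G (Y - Y')) ^ (1/2:ℝ) * h' Y') ^ (2:ℝ)) ^ (1/(2:ℝ))) ^ (2:ℝ) :=
          ENNReal.rpow_le_rpow cs (by norm_num)
      _ = IG * ∫⁻ Y', G (Y - Y') * (h' Y') ^ (2:ℝ) := by
          simp only [key2, key3, hGsub Y]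
          rw [ENNReal.mul_rpow_of_nonneg _ _ (by norm_num), ← ENNReal.rpow_mul,
            ← ENNReal.rpow_mul]
          norm_num
  have hprod : Measurable (fun p : ℝ × ℝ => G (p.1 - p.2) * (h' p.2) ^ (2:ℝ)) :=
    (hG.comp (measurable_fst.sub measurable_snd)).mul
      ((hm.pow_const _).comp measurable_snd)
  have swap : ∫⁻ Y : ℝ, ∫⁻ Y', G (Y - Y') * (h' Y') ^ (2:ℝ)
      = IG * ∫⁻ Y' : ℝ, (h' Y') ^ (2:ℝ) := by
    rw [lintegral_lintegral_swap hprod.aemeasurable]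
    calc ∫⁻ Y' : ℝ, ∫⁻ Y : ℝ, G (Y - Y') * (h' Y') ^ (2:ℝ)
        = ∫⁻ Y' : ℝ, IG * (h' Y') ^ (2:ℝ) := by
          congr 1; ext Y'
          rw [lintegral_mul_const'' (f := fun Y : ℝ => G (Y - Y')) _
            (hG.comp (measurable_id.sub measurable_const)).aemeasurable, hGsub' Y']
      _ = IG * ∫⁻ Y' : ℝ, (h' Y') ^ (2:ℝ) :=
          lintegral_const_mul'' _ (hm.pow_const _).aemeasurable
  have hsq : IG * IG = IG ^ (2:ℝ) := by
    rw [show (2:ℝ) = ((2:ℕ):ℝ) by norm_num, ENNReal.rpow_natCast, pow_two]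
  calc (∫⁻ Y : ℝ, (∫⁻ Y', G (Y - Y') * h' Y') ^ (2:ℝ)) ^ (1/2:ℝ)
      ≤ (∫⁻ Y : ℝ, IG * ∫⁻ Y', G (Y - Y') * (h' Y') ^ (2:ℝ)) ^ (1/2:ℝ) :=
        ENNReal.rpow_le_rpow (lintegral_mono step2) (by norm_num)
    _ = (IG * (IG * ∫⁻ Y' : ℝ, (h' Y') ^ (2:ℝ))) ^ (1/2:ℝ) := by
        rw [lintegral_const_mul'' _ hprod.lintegral_prod_right'.aemeasurable, swap]
    _ = IG * (∫⁻ Y' : ℝ, (h' Y') ^ (2:ℝ)) ^ (1/2:ℝ) := by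
        rw [← mul_assoc, hsq, ENNReal.mul_rpow_of_nonneg _ _ (by norm_num),
          ← ENNReal.rpow_mul]
        norm_num

lemma exp_tail_integral {b c : ℝ} (hb : 0 < b) :
    ∫⁻ z in Set.Ioi c, ENNReal.ofReal (Real.exp (b * (c - z))) = ENNReal.ofReal b⁻¹ := by
  have hint : IntegrableOn (fun z : ℝ => Real.exp (b * (c - z))) (Set.Ioi c) := by
    have h1 : IntegrableOn (fun z : ℝ => Real.exp (b * c) * Real.exp (-b * z)) (Set.Ioi c) :=
      (exp_neg_integrableOn_Ioi c hb).const_mul _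
    refine h1.congr_fun (fun z _ => ?_) measurableSet_Ioi
    dsimp only; rw [← Real.exp_add]; ring_nf
  rw [← ofReal_integral_eq_lintegral_ofReal hint
    (Filter.Eventually.of_forall fun z => (Real.exp_pos _).le)]
  congr 1
  have h2 : ∀ z ∈ Set.Ioi c, Real.exp (b * (c - z)) = Real.exp (b * c) * Real.exp (-(b * z)) := by
    intro z _; rw [← Real.exp_add]; ring_nf
  rw [setIntegral_congr_fun measurableSet_Ioi h2, MeasureTheory.integral_const_mul]
  have h3 : (∫ z in Set.Ioi c, Real.exp (-(b * z)))
      = b⁻¹ • ∫ x in Set.Ioi (b * c), Real.exp (-x) :=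
    integral_comp_mul_left_Ioi (fun y => Real.exp (-y)) c hb
  rw [h3, integral_exp_neg_Ioi, smul_eq_mul, show rexp (b*c) * (b⁻¹ * rexp (-(b*c))) = b⁻¹ * (rexp (b*c) * rexp (-(b*c))) by ring, ← Real.exp_add]
  simp

lemma gk_lintegral_le {b c : ℝ} (hb : 0 < b) (hc : 0 ≤ c) :
    ∫⁻ z : ℝ, ENNReal.ofReal (min 1 (Real.exp (b * (c - |z|))))
      ≤ ENNReal.ofReal (2 * c + 2 / b) := by
  set F1 : ℝ → ℝ≥0∞ := (Set.Icc (-c) c).indicator (fun _ => (1:ℝ≥0∞)) with hF1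
  set F2 : ℝ → ℝ≥0∞ :=
    (Set.Iic (-c)).indicator (fun z => ENNReal.ofReal (Real.exp (b * (c + z)))) with hF2
  set F3 : ℝ → ℝ≥0∞ :=
    (Set.Ioi c).indicator (fun z => ENNReal.ofReal (Real.exp (b * (c - z)))) with hF3
  have hpt : ∀ z : ℝ, ENNReal.ofReal (min 1 (Real.exp (b * (c - |z|))))
      ≤ F1 z + F2 z + F3 z := by
    intro z
    rcases le_or_gt z (-c) with hz | hz
    · have habs : |z| = -z := abs_of_nonpos (by linarith)
      have : ENNReal.ofReal (min 1 (Real.exp (b * (c - |z|))))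
          ≤ F2 z := by
        rw [hF2, Set.indicator_of_mem (by exact hz : z ∈ Set.Iic (-c))]
        apply ENNReal.ofReal_le_ofReal
        rw [habs]
        exact (min_le_right _ _).trans (by rw [sub_neg_eq_add])
      calc ENNReal.ofReal (min 1 (Real.exp (b * (c - |z|)))) ≤ F2 z := this
        _ ≤ F1 z + F2 z + F3 z := by
            calc F2 z ≤ F1 z + F2 z := le_add_self
              _ ≤ F1 z + F2 z + F3 z := le_add_of_nonneg_right zero_le
    · rcases le_or_gt z c with hz2 | hz2
      · have : ENNReal.ofReal (min 1 (Real.exp (b * (c - |z|)))) ≤ F1 z := by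
          rw [hF1, Set.indicator_of_mem (Set.mem_Icc.mpr ⟨hz.le, hz2⟩)]
          calc ENNReal.ofReal (min 1 (Real.exp (b * (c - |z|))))
              ≤ ENNReal.ofReal 1 := ENNReal.ofReal_le_ofReal (min_le_left _ _)
            _ = 1 := ENNReal.ofReal_one
        exact this.trans (le_add_of_nonneg_right zero_le |>.trans'
          (le_add_of_nonneg_right zero_le))
      · have habs : |z| = z := abs_of_nonneg (by linarith)
        have : ENNReal.ofReal (min 1 (Real.exp (b * (c - |z|)))) ≤ F3 z := by
          rw [hF3, Set.indicator_of_mem (by exact hz2 : z ∈ Set.Ioi c)]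
          apply ENNReal.ofReal_le_ofReal
          rw [habs]
          exact min_le_right _ _
        exact this.trans le_add_self
  have hmF2 : Measurable F2 := by
    apply Measurable.indicator _ measurableSet_Iic
    exact (Real.continuous_exp.comp (by continuity)).measurable.ennreal_ofReal
  have hmF3 : Measurable F3 := by
    apply Measurable.indicator _ measurableSet_Ioi
    exact (Real.continuous_exp.comp (by continuity)).measurable.ennreal_ofReal
  have hP1 : ∫⁻ z, F1 z = ENNReal.ofReal (2 * c) := by
    rw [hF1, lintegral_indicator measurableSet_Icc, setLIntegral_const, one_mul,
      Real.volume_Icc]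
    congr 1; ring
  have hP3 : ∫⁻ z, F3 z = ENNReal.ofReal b⁻¹ := by
    rw [hF3, lintegral_indicator measurableSet_Ioi]
    exact exp_tail_integral hb
  have hP2 : ∫⁻ z, F2 z = ENNReal.ofReal b⁻¹ := by
    have hneg := (Measure.measurePreserving_neg (volume : Measure ℝ)).lintegral_comp hmF2
    have hcomp : ∀ x : ℝ, F2 (-x)
        = (Set.Ici c).indicator (fun z => ENNReal.ofReal (Real.exp (b * (c - z)))) x := by
      intro x
      rw [hF2]
      by_cases hx : c ≤ x
      · rw [Set.indicator_of_mem (by simpa using hx : -x ∈ Set.Iic (-c)),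
          Set.indicator_of_mem (by exact hx : x ∈ Set.Ici c)]
        norm_num [sub_eq_add_neg]
      · rw [Set.indicator_of_notMem (by simpa using hx),
          Set.indicator_of_notMem (by exact hx)]
    calc ∫⁻ z, F2 z = ∫⁻ x, F2 (-x) := hneg.symm
      _ = ∫⁻ x, (Set.Ici c).indicator (fun z => ENNReal.ofReal (Real.exp (b * (c - z)))) x := by
          simp_rw [hcomp]
      _ = ∫⁻ z in Set.Ici c, ENNReal.ofReal (Real.exp (b * (c - z))) := by
          rw [lintegral_indicator measurableSet_Ici]
      _ = ∫⁻ z in Set.Ioi c, ENNReal.ofReal (Real.exp (b * (c - z))) := by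
          rw [restrict_Ioi_eq_restrict_Ici]
      _ = ENNReal.ofReal b⁻¹ := exp_tail_integral hb
  calc ∫⁻ z : ℝ, ENNReal.ofReal (min 1 (Real.exp (b * (c - |z|))))
      ≤ ∫⁻ z, (F1 z + F2 z + F3 z) := lintegral_mono hpt
    _ = (∫⁻ z, (F1 z + F2 z)) + ∫⁻ z, F3 z := by
        rw [lintegral_add_right _ hmF3]
    _ = (∫⁻ z, F1 z) + (∫⁻ z, F2 z) + ∫⁻ z, F3 z := by
        rw [lintegral_add_right _ hmF2]
    _ = ENNReal.ofReal (2 * c) + ENNReal.ofReal b⁻¹ + ENNReal.ofReal b⁻¹ := by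
        rw [hP1, hP2, hP3]
    _ = ENNReal.ofReal (2 * c + 2 / b) := by
        rw [← ENNReal.ofReal_add (by linarith) (by positivity),
          ← ENNReal.ofReal_add (by positivity) (by positivity)]
        congr 1
        rw [div_eq_mul_inv]; ring

lemma kernel_bound (B Cm Cp : ℝ) (hB : 0 < B) (hCm : 0 < Cm) (hCp : 0 < Cp) (hle : Cm ≤ Cp)
    (v ξ : ℝ → ℝ)
    (hv : MemLp v 2 (volume : Measure ℝ))
    (hvB : eLpNorm v 2 (volume : Measure ℝ) ≤ ENNReal.ofReal B)
    (hξm : Measurable ξ) (hξ : ∀ᵐ Y : ℝ, ξ Y ∈ Set.Icc Cm Cp) :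
    ∀ Y Y' : ℝ, Real.exp (-|∫ s in Y..Y', Real.cos (v s / 2) ^ 2 * ξ s|)
      ≤ min 1 (Real.exp ((Cm/2) * (B^2/2 - |Y - Y'|))) := by
  have hvsq : Integrable (fun a => (v a)^2) (volume : Measure ℝ) := hv.integrable_sq
  -- ∫ v^2 ≤ B^2
  have hreal : ∫ a, (v a)^2 ≤ B^2 := by
    have hl : ∫⁻ a, (‖v a‖₊ : ℝ≥0∞) ^ (2:ℝ) ≤ ENNReal.ofReal (B^2) := by
      have h1 : eLpNorm v 2 (volume : Measure ℝ)
          = (∫⁻ a, (‖v a‖₊ : ℝ≥0∞) ^ (2:ℝ)) ^ (1/2:ℝ) := by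
        rw [eLpNorm_eq_lintegral_rpow_enorm_toReal (by norm_num) (by norm_num)]
        norm_num
        rfl
      have h2 := ENNReal.rpow_le_rpow (h1 ▸ hvB) (by norm_num : (0:ℝ) ≤ 2)
      rwa [← ENNReal.rpow_mul, one_div, inv_mul_cancel₀ (by norm_num : (2:ℝ) ≠ 0),
        ENNReal.rpow_one, ENNReal.ofReal_rpow_of_nonneg hB.le (by norm_num),
        show ((B:ℝ) ^ (2:ℝ)) = B^2 by rw [show (2:ℝ)=((2:ℕ):ℝ) by norm_num, Real.rpow_natCast]] at h2
    have heq : ∫ a, (v a)^2 = (∫⁻ a, (‖v a‖₊ : ℝ≥0∞) ^ (2:ℝ)).toReal := by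
      rw [integral_eq_lintegral_of_nonneg_ae (Filter.Eventually.of_forall fun a => sq_nonneg _)
        hvsq.aestronglyMeasurable]
      congr 1
      apply lintegral_congr
      intro a
      rw [← enorm_eq_nnnorm, Real.enorm_eq_ofReal_abs, ENNReal.ofReal_rpow_of_nonneg (abs_nonneg _) (by norm_num),
        show (|v a| ^ (2:ℝ)) = |v a|^2 by rw [show (2:ℝ)=((2:ℕ):ℝ) by norm_num, Real.rpow_natCast], sq_abs]
    rw [heq]
    calc (∫⁻ a, (‖v a‖₊ : ℝ≥0∞) ^ (2:ℝ)).toReal ≤ (ENNReal.ofReal (B^2)).toReal :=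
          ENNReal.toReal_mono ENNReal.ofReal_ne_top hl
      _ = B^2 := ENNReal.toReal_ofReal (by positivity)
  -- interval integrability of the integrand
  have hfm : AEStronglyMeasurable (fun s => Real.cos (v s / 2) ^ 2 * ξ s) (volume : Measure ℝ) := by
    have : Continuous (fun x : ℝ => Real.cos (x / 2) ^ 2) := by continuity
    exact (this.comp_aestronglyMeasurable hv.1).mul hξm.aestronglyMeasurable
  have hfi : ∀ Y Y' : ℝ, IntervalIntegrable (fun s => Real.cos (v s / 2) ^ 2 * ξ s)
      (volume : Measure ℝ) Y Y' := by
    intro Y Y'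
    rw [intervalIntegrable_iff]
    apply Integrable.mono' (g := fun _ => Cp)
    · exact integrableOn_const measure_Ioc_lt_top.ne
    · exact hfm.restrict
    · apply ae_restrict_of_ae
      filter_upwards [hξ] with s hs
      have h1 : (0:ℝ) ≤ Real.cos (v s / 2) ^ 2 := sq_nonneg _
      have h2 : Real.cos (v s / 2) ^ 2 ≤ 1 := cos_sq_le_one _
      have := hs.1; have := hs.2
      rw [Real.norm_eq_abs, abs_mul, abs_of_nonneg h1, abs_of_nonneg (by linarith : (0:ℝ) ≤ ξ s)]
      nlinarith
  -- lower bound for ordered endpoints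
  have hI : ∀ Y Y' : ℝ, Y ≤ Y' →
      Cm * ((Y' - Y) - B^2/4) ≤ ∫ s in Y..Y', Real.cos (v s / 2) ^ 2 * ξ s := by
    intro Y Y' hYY'
    have hlow : IntervalIntegrable (fun s => Cm * (1 - (v s)^2/4)) (volume : Measure ℝ) Y Y' :=
      (((intervalIntegrable_const (c := (1:ℝ))).sub
        (hvsq.intervalIntegrable.div_const 4)).const_mul Cm)
    have hae : ∀ᵐ s : ℝ, Cm * (1 - (v s)^2/4) ≤ Real.cos (v s / 2) ^ 2 * ξ s := by
      filter_upwards [hξ] with s hs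
      have h1 : Real.sin (v s / 2) ^ 2 ≤ (v s / 2) ^ 2 := Real.sin_sq_le_sq
      have h2 : Real.cos (v s / 2) ^ 2 = 1 - Real.sin (v s / 2) ^ 2 := Real.cos_sq' _
      have h3 : 1 - (v s)^2/4 ≤ Real.cos (v s / 2) ^ 2 := by rw [h2]; nlinarith
      have h4 : (0:ℝ) ≤ Real.cos (v s / 2) ^ 2 := sq_nonneg _
      have := hs.1
      nlinarith
    have hmono := intervalIntegral.integral_mono_ae hYY' hlow (hfi Y Y') hae
    refine le_trans ?_ hmono
    have hval : ∫ s in Y..Y', Cm * (1 - (v s)^2/4)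
        = Cm * ((Y' - Y) - (∫ s in Y..Y', (v s)^2)/4) := by
      rw [intervalIntegral.integral_const_mul]
      congr 1
      rw [intervalIntegral.integral_sub intervalIntegrable_const
        (hvsq.intervalIntegrable.div_const 4)]
      simp [intervalIntegral.integral_div]
    rw [hval]
    have hsq_le : ∫ s in Y..Y', (v s)^2 ≤ B^2 := by
      rw [intervalIntegral.integral_of_le hYY']
      calc ∫ s in Set.Ioc Y Y', (v s)^2 ≤ ∫ a, (v a)^2 :=
            setIntegral_le_integral hvsq (Filter.Eventually.of_forall fun a => sq_nonneg _)
        _ ≤ B^2 := hreal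
    have hsqnn : 0 ≤ ∫ s in Y..Y', (v s)^2 := by
      rw [intervalIntegral.integral_of_le hYY']
      exact setIntegral_nonneg measurableSet_Ioc fun s _ => sq_nonneg _
    nlinarith
  -- conclude
  intro Y Y'
  apply le_min (Real.exp_le_one_iff.mpr (neg_nonpos.mpr (abs_nonneg _)))
  apply Real.exp_le_exp.mpr
  rw [neg_le]
  have key : ∀ Y Y' : ℝ, Y ≤ Y' →
      -(Cm/2 * (B^2/2 - |Y - Y'|)) ≤ |∫ s in Y..Y', Real.cos (v s / 2) ^ 2 * ξ s| := by
    intro a b hab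
    have hW : |a - b| = b - a := by rw [abs_sub_comm]; exact abs_of_nonneg (by linarith)
    have h1 := hI a b hab
    have h2 : Cm * ((b - a) - B^2/4) ≤ |∫ s in a..b, Real.cos (v s / 2) ^ 2 * ξ s| :=
      h1.trans (le_abs_self _)
    rw [hW]
    have hWnn : 0 ≤ b - a := by linarith
    nlinarith [abs_nonneg (∫ s in a..b, Real.cos (v s / 2) ^ 2 * ξ s)]
  rcases le_total Y Y' with hYY' | hYY'
  · exact key Y Y' hYY'
  · have := key Y' Y hYY'
    rwa [intervalIntegral.integral_symm, abs_neg, abs_sub_comm] 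


/-- `L²` bounds for `Q` and `Q_x`: with `‖g‖_{L¹} = B² + 4/C⁻`,
`‖Q‖_{L²} ≤ (C⁺/2) ‖g‖_{L¹} ‖u‖_{L²}` and `‖Q_x‖_{L²} ≤ C⁺ ‖g‖_{L¹} ‖u‖_{L²}`. -/
theorem stmt_11 (B Cm Cp : ℝ) (hB : 0 < B) (hCm : 0 < Cm) (hCp : 0 < Cp) (hle : Cm ≤ Cp)
    (v ξ u : ℝ → ℝ)
    (hv : MemLp v 2 (volume : Measure ℝ))
    (hvB : eLpNorm v 2 (volume : Measure ℝ) ≤ ENNReal.ofReal B)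
    (hξm : Measurable ξ) (hξ : ∀ᵐ Y : ℝ, ξ Y ∈ Set.Icc Cm Cp)
    (hu : MemLp u 2 (volume : Measure ℝ)) :
    eLpNorm (Qop v ξ u) 2 (volume : Measure ℝ)
        ≤ ENNReal.ofReal ((Cp / 2) * (B ^ 2 + 4 / Cm))
            * eLpNorm u 2 (volume : Measure ℝ) ∧
    eLpNorm (Qxop v ξ u) 2 (volume : Measure ℝ)
        ≤ ENNReal.ofReal (Cp * (B ^ 2 + 4 / Cm))
            * eLpNorm u 2 (volume : Measure ℝ) := by
  classical
  set G : ℝ → ℝ≥0∞ :=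
    fun z => ENNReal.ofReal (min 1 (Real.exp ((Cm/2) * (B^2/2 - |z|)))) with hGdef
  have hG : Measurable G := by
    apply Continuous.measurable
    apply ENNReal.continuous_ofReal.comp
    exact continuous_const.min (Real.continuous_exp.comp (by continuity))
  set h : ℝ → ℝ≥0∞ := fun Y' => (‖u Y'‖₊ : ℝ≥0∞) with hhdef
  have hh : AEMeasurable h (volume : Measure ℝ) := hu.1.aemeasurable.enorm
  set T : ℝ → ℝ≥0∞ := fun Y => ∫⁻ Y', G (Y - Y') * h Y' with hTdef
  set K : ℝ → ℝ → ℝ := fun Y Y' =>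
    Real.exp (-|∫ s in Y..Y', Real.cos (v s / 2) ^ 2 * ξ s|)
      * (u Y' * Real.cos (v Y' / 2) ^ 2 * ξ Y') with hKdef
  have hker := kernel_bound B Cm Cp hB hCm hCp hle v ξ hv hvB hξm hξ
  -- pointwise enorm bound on K
  have hKb : ∀ Y : ℝ, ∀ᵐ Y' : ℝ, (‖K Y Y'‖₊ : ℝ≥0∞)
      ≤ ENNReal.ofReal Cp * (G (Y - Y') * h Y') := by
    intro Y
    filter_upwards [hξ] with Y' hY'
    have h0 : (0:ℝ) ≤ ξ Y' := le_trans hCm.le hY'.1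
    have h1 : |K Y Y'| ≤ min 1 (Real.exp ((Cm/2) * (B^2/2 - |Y - Y'|))) * (Cp * |u Y'|) := by
      rw [hKdef]
      simp only [abs_mul, abs_of_nonneg (Real.exp_pos _).le, abs_of_nonneg (sq_nonneg
        (Real.cos (v Y' / 2))), abs_of_nonneg h0]
      have e1 := hker Y Y'
      have e2 : Real.cos (v Y' / 2) ^ 2 ≤ 1 := Real.cos_sq_le_one _
      have e3 : ξ Y' ≤ Cp := hY'.2
      have e4 : (0:ℝ) < Real.exp (-|∫ s in Y..Y', Real.cos (v s / 2) ^ 2 * ξ s|) :=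
        Real.exp_pos _
      have e5 : (0:ℝ) ≤ min 1 (Real.exp ((Cm/2) * (B^2/2 - |Y - Y'|))) :=
        le_min zero_le_one (Real.exp_pos _).le
      have e6 : (0:ℝ) ≤ Real.cos (v Y' / 2) ^ 2 := sq_nonneg _
      have s1 : Real.exp (-|∫ s in Y..Y', Real.cos (v s / 2) ^ 2 * ξ s|)
          * Real.cos (v Y' / 2) ^ 2 ≤ min 1 (Real.exp ((Cm/2) * (B^2/2 - |Y - Y'|))) := by
        nlinarith
      have s2 : Real.exp (-|∫ s in Y..Y', Real.cos (v s / 2) ^ 2 * ξ s|)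
          * Real.cos (v Y' / 2) ^ 2 * ξ Y'
          ≤ min 1 (Real.exp ((Cm/2) * (B^2/2 - |Y - Y'|))) * Cp :=
        mul_le_mul s1 e3 h0 e5
      calc Real.exp (-|∫ s in Y..Y', Real.cos (v s / 2) ^ 2 * ξ s|)
            * (|u Y'| * Real.cos (v Y' / 2) ^ 2 * ξ Y')
          = (Real.exp (-|∫ s in Y..Y', Real.cos (v s / 2) ^ 2 * ξ s|)
              * Real.cos (v Y' / 2) ^ 2 * ξ Y') * |u Y'| := by ring
        _ ≤ (min 1 (Real.exp ((Cm/2) * (B^2/2 - |Y - Y'|))) * Cp) * |u Y'| :=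
            mul_le_mul_of_nonneg_right s2 (abs_nonneg _)
        _ = min 1 (Real.exp ((Cm/2) * (B^2/2 - |Y - Y'|))) * (Cp * |u Y'|) := by ring
    calc (‖K Y Y'‖₊ : ℝ≥0∞) = ENNReal.ofReal |K Y Y'| := Real.enorm_eq_ofReal_abs _
      _ ≤ ENNReal.ofReal (min 1 (Real.exp ((Cm/2) * (B^2/2 - |Y - Y'|))) * (Cp * |u Y'|)) :=
          ENNReal.ofReal_le_ofReal h1
      _ = ENNReal.ofReal Cp * (G (Y - Y') * h Y') := by
          rw [ENNReal.ofReal_mul (le_min zero_le_one (Real.exp_pos _).le),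
            ENNReal.ofReal_mul hCp.le, hGdef, hhdef]
          simp only []
          rw [← enorm_eq_nnnorm, Real.enorm_eq_ofReal_abs]
          ring
  have hKint : ∀ Y : ℝ, ∫⁻ Y', (‖K Y Y'‖₊ : ℝ≥0∞) ≤ ENNReal.ofReal Cp * T Y := by
    intro Y
    calc ∫⁻ Y', (‖K Y Y'‖₊ : ℝ≥0∞) ≤ ∫⁻ Y', ENNReal.ofReal Cp * (G (Y - Y') * h Y') :=
          lintegral_mono_ae (hKb Y)
      _ = ENNReal.ofReal Cp * T Y := by
          rw [hTdef]
          exact lintegral_const_mul'' _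
            (((hG.comp (measurable_const.sub measurable_id)).aemeasurable).mul hh)
  -- bounds on Q and Qx
  have hQ : ∀ Y : ℝ, (‖Qop v ξ u Y‖₊ : ℝ≥0∞) ≤ ENNReal.ofReal (Cp/2) * T Y := by
    intro Y
    have hrepr : Qop v ξ u Y = (1/2 : ℝ) * ∫ Y', K Y Y' := rfl
    calc (‖Qop v ξ u Y‖₊ : ℝ≥0∞)
        = (‖(1/2 : ℝ)‖₊ : ℝ≥0∞) * (‖∫ Y', K Y Y'‖₊ : ℝ≥0∞) := by
          rw [hrepr, nnnorm_mul, ENNReal.coe_mul]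
      _ ≤ ENNReal.ofReal (1/2) * (ENNReal.ofReal Cp * T Y) := by
          apply mul_le_mul
          · rw [← enorm_eq_nnnorm, Real.enorm_eq_ofReal_abs]
            exact le_of_eq (by norm_num)
          · exact le_trans (enorm_integral_le_lintegral_enorm _) (hKint Y)
          · exact zero_le
          · exact zero_le
      _ = ENNReal.ofReal (Cp/2) * T Y := by
          rw [← mul_assoc, ← ENNReal.ofReal_mul (by norm_num),
            show (1/2:ℝ) * Cp = Cp/2 by ring]
  have hQx : ∀ Y : ℝ, (‖Qxop v ξ u Y‖₊ : ℝ≥0∞) ≤ ENNReal.ofReal Cp * T Y := by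
    intro Y
    have hA : (‖∫ Y' in Set.Ioi Y, K Y Y'‖₊ : ℝ≥0∞) ≤ ENNReal.ofReal Cp * T Y :=
      le_trans (enorm_integral_le_lintegral_enorm _)
        (le_trans (setLIntegral_le_lintegral _ _) (hKint Y))
    have hB' : (‖∫ Y' in Set.Iio Y, K Y Y'‖₊ : ℝ≥0∞) ≤ ENNReal.ofReal Cp * T Y :=
      le_trans (enorm_integral_le_lintegral_enorm _)
        (le_trans (setLIntegral_le_lintegral _ _) (hKint Y))
    have hrepr : Qxop v ξ u Y
        = (1/2 : ℝ) * ((∫ Y' in Set.Ioi Y, K Y Y') - ∫ Y' in Set.Iio Y, K Y Y') := rfl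
    calc (‖Qxop v ξ u Y‖₊ : ℝ≥0∞)
        = (‖(1/2 : ℝ)‖₊ : ℝ≥0∞)
            * (‖(∫ Y' in Set.Ioi Y, K Y Y') - ∫ Y' in Set.Iio Y, K Y Y'‖₊ : ℝ≥0∞) := by
          rw [hrepr, nnnorm_mul, ENNReal.coe_mul]
      _ ≤ ENNReal.ofReal (1/2)
            * ((‖∫ Y' in Set.Ioi Y, K Y Y'‖₊ : ℝ≥0∞) + (‖∫ Y' in Set.Iio Y, K Y Y'‖₊ : ℝ≥0∞)) := by
          apply mul_le_mul
          · rw [← enorm_eq_nnnorm, Real.enorm_eq_ofReal_abs]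
            exact le_of_eq (by norm_num)
          · exact_mod_cast nnnorm_sub_le _ _
          · exact zero_le
          · exact zero_le
      _ ≤ ENNReal.ofReal (1/2) * (ENNReal.ofReal Cp * T Y + ENNReal.ofReal Cp * T Y) :=
          mul_le_mul_right (add_le_add hA hB') _
      _ = ENNReal.ofReal Cp * T Y := by
          rw [← two_mul, ← mul_assoc, show ENNReal.ofReal (1/2) * 2 = 1 by
            rw [show (2:ℝ≥0∞) = ENNReal.ofReal 2 by norm_num,
              ← ENNReal.ofReal_mul (by norm_num)]
            norm_num, one_mul]
  -- the main L² estimate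
  have hu2 : eLpNorm u 2 (volume : Measure ℝ) = (∫⁻ Y', (h Y')^(2:ℝ))^(1/2:ℝ) := by
    rw [eLpNorm_eq_lintegral_rpow_enorm_toReal (by norm_num) (by norm_num)]
    norm_num
    rfl
  have hIG : ∫⁻ z, G z ≤ ENNReal.ofReal (B^2 + 4/Cm) := by
    calc ∫⁻ z, G z ≤ ENNReal.ofReal (2 * (B^2/2) + 2 / (Cm/2)) :=
          gk_lintegral_le (by positivity) (by positivity)
      _ = ENNReal.ofReal (B^2 + 4/Cm) := by
          congr 1
          field_simp
          ring
  have main : ∀ (f : ℝ → ℝ) (c : ℝ), 0 ≤ c →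
      (∀ Y : ℝ, (‖f Y‖₊ : ℝ≥0∞) ≤ ENNReal.ofReal c * T Y) →
      eLpNorm f 2 (volume : Measure ℝ)
        ≤ ENNReal.ofReal (c * (B^2 + 4/Cm)) * eLpNorm u 2 (volume : Measure ℝ) := by
    intro f c hc hf
    have hconv := conv_L2_bound G hG h hh
    calc eLpNorm f 2 (volume : Measure ℝ)
        = (∫⁻ Y, ((‖f Y‖₊ : ℝ≥0∞))^(2:ℝ))^(1/2:ℝ) := by
          rw [eLpNorm_eq_lintegral_rpow_enorm_toReal (by norm_num) (by norm_num)]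
          norm_num
          rfl
      _ ≤ (∫⁻ Y, (ENNReal.ofReal c * T Y)^(2:ℝ))^(1/2:ℝ) :=
          ENNReal.rpow_le_rpow (lintegral_mono fun Y =>
            ENNReal.rpow_le_rpow (hf Y) (by norm_num)) (by norm_num)
      _ = (ENNReal.ofReal c ^ (2:ℝ) * ∫⁻ Y, (T Y)^(2:ℝ))^(1/2:ℝ) := by
          rw [← lintegral_const_mul' _ _
            (ENNReal.rpow_ne_top_of_nonneg (by norm_num) ENNReal.ofReal_ne_top)]
          congr 1
          apply lintegral_congr
          intro Y
          rw [ENNReal.mul_rpow_of_nonneg _ _ (by norm_num)]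
      _ = ENNReal.ofReal c * (∫⁻ Y, (T Y)^(2:ℝ))^(1/2:ℝ) := by
          rw [ENNReal.mul_rpow_of_nonneg _ _ (by norm_num), ← ENNReal.rpow_mul]
          norm_num
      _ ≤ ENNReal.ofReal c * ((∫⁻ z, G z) * (∫⁻ Y', (h Y')^(2:ℝ))^(1/2:ℝ)) :=
          mul_le_mul_right hconv _
      _ ≤ ENNReal.ofReal (c * (B^2 + 4/Cm)) * eLpNorm u 2 (volume : Measure ℝ) := by
          rw [hu2, ← mul_assoc, ENNReal.ofReal_mul hc]
          exact mul_le_mul_left (mul_le_mul_right hIG _) _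
  exact ⟨main _ (Cp/2) (by positivity) hQ, main _ Cp hCp.le hQx⟩
end
end

section
/- Let u ∈ H¹(ℝ) be absolutely continuous, and let ξ, v : ℝ → ℝ be measurable with ξ ≥ 0 a.e., such that the a.e. derivative of u satisfies u'(Y) = ξ(Y) sin(v(Y)/2) cos(v(Y)/2) for a.e. Y ∈ ℝ. Then sup_{Y ∈ ℝ} u²(Y) ≤ ∫_ℝ [u²(Y) ξ(Y) cos²(v(Y)/2) + ξ(Y) sin²(v(Y)/2)] dY. -/
open MeasureTheory Real Set

lemma key_aux (g : ℝ → ℝ) {x Y : ℝ} (hg : IntegrableOn g (Ioc x Y)) :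
    Integrable (fun t => (∫ s in Ioc x t, g s) * g t) (volume.restrict (Ioc x Y)) ∧
    ∫ t in Ioc x Y, (∫ s in Ioc x t, g s) * g t = (∫ s in Ioc x Y, g s) ^ 2 / 2 := by
  set μ := volume.restrict (Ioc x Y) with hμ
  have hgi : Integrable g μ := hg
  have hprod : Integrable (fun p : ℝ × ℝ => g p.1 * g p.2) (μ.prod μ) := hgi.mul_prod hgi
  have hprod' : Integrable (fun p : ℝ × ℝ => g p.2 * g p.1) (μ.prod μ) := by
    have : (fun p : ℝ × ℝ => g p.2 * g p.1) = fun p : ℝ × ℝ => g p.1 * g p.2 := by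
      funext p; ring
    rw [this]; exact hprod
  have hmge : MeasurableSet {p : ℝ × ℝ | p.2 ≤ p.1} :=
    measurableSet_le measurable_snd measurable_fst
  have hmle : MeasurableSet {p : ℝ × ℝ | p.1 ≤ p.2} :=
    measurableSet_le measurable_fst measurable_snd
  -- integrability of the two "triangle" integrands
  have hF1 : Integrable (fun p : ℝ × ℝ => if p.2 ≤ p.1 then g p.2 * g p.1 else 0) (μ.prod μ) := by
    have h := hprod'.indicator hmge
    refine h.congr (Filter.Eventually.of_forall fun p => ?_)
    simp [Set.indicator_apply]
  have hF2 : Integrable (fun p : ℝ × ℝ => if p.1 ≤ p.2 then g p.2 * g p.1 else 0) (μ.prod μ) := by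
    have h := hprod'.indicator hmle
    refine h.congr (Filter.Eventually.of_forall fun p => ?_)
    simp [Set.indicator_apply]
  -- inner integrands integrable for each t
  have hinner1 : ∀ t : ℝ, Integrable (fun s => if s ≤ t then g s * g t else 0) μ := by
    intro t
    have h := (hgi.mul_const (g t)).indicator (measurableSet_Iic (a := t))
    refine h.congr (Filter.Eventually.of_forall fun s => ?_)
    simp [Set.indicator_apply]
  have hinner2 : ∀ t : ℝ, Integrable (fun s => if t ≤ s then g s * g t else 0) μ := by
    intro t
    have h := (hgi.mul_const (g t)).indicator (measurableSet_Ici (a := t))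
    refine h.congr (Filter.Eventually.of_forall fun s => ?_)
    simp [Set.indicator_apply]
  -- inner integral of triangle 1 equals the desired integrand, for t in Ioc x Y
  have hstep1 : ∀ t ∈ Ioc x Y,
      (∫ s, (if s ≤ t then g s * g t else 0) ∂μ) = (∫ s in Ioc x t, g s) * g t := by
    intro t ht
    have h1 : (fun s => if s ≤ t then g s * g t else 0)
        = (Iic t).indicator (fun s => g s * g t) := by
      funext s; simp [Set.indicator_apply]
    rw [h1, integral_indicator measurableSet_Iic, hμ,
      Measure.restrict_restrict measurableSet_Iic]
    have h2 : Iic t ∩ Ioc x Y = Ioc x t := by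
      ext s; simp only [mem_inter_iff, mem_Iic, mem_Ioc]
      constructor
      · rintro ⟨h, h', _⟩; exact ⟨h', h⟩
      · rintro ⟨h, h'⟩; exact ⟨h', h, h'.trans ht.2⟩
    rw [h2, integral_mul_const]
  -- diagonal vanishes
  have hdiag : ∀ t : ℝ, (∫ s, ({t} : Set ℝ).indicator (fun s => g s * g t) s ∂μ) = 0 := by
    intro t
    rw [integral_indicator (measurableSet_singleton t), hμ,
      Measure.restrict_restrict (measurableSet_singleton t)]
    have : volume.restrict ({t} ∩ Ioc x Y) = 0 := by
      rw [Measure.restrict_eq_zero]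
      exact measure_mono_null inter_subset_left (measure_singleton t)
    rw [this, integral_zero_measure]
  -- sum of the two inner integrals
  have hsum : ∀ t : ℝ,
      (∫ s, (if s ≤ t then g s * g t else 0) ∂μ) + (∫ s, (if t ≤ s then g s * g t else 0) ∂μ)
        = (∫ s, g s ∂μ) * g t := by
    intro t
    rw [← integral_add (hinner1 t) (hinner2 t)]
    have hpt : ∀ s : ℝ, (if s ≤ t then g s * g t else 0) + (if t ≤ s then g s * g t else 0)
        = g s * g t + ({t} : Set ℝ).indicator (fun s => g s * g t) s := by
      intro s
      rcases lt_trichotomy s t with h | h | h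
      · simp [h.le, not_le.mpr h, Set.indicator_apply, h.ne]
      · subst h; simp [Set.indicator_apply]
      · simp [not_le.mpr h, h.le, Set.indicator_apply, h.ne']
    calc (∫ s, ((if s ≤ t then g s * g t else 0) + (if t ≤ s then g s * g t else 0)) ∂μ)
        = ∫ s, (g s * g t + ({t} : Set ℝ).indicator (fun s => g s * g t) s) ∂μ := by
          exact integral_congr_ae (Filter.Eventually.of_forall hpt)
      _ = (∫ s, g s * g t ∂μ) + ∫ s, ({t} : Set ℝ).indicator (fun s => g s * g t) s ∂μ := by
          refine integral_add (hgi.mul_const _) ?_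
          exact (hgi.mul_const (g t)).indicator (measurableSet_singleton t)
      _ = (∫ s, g s ∂μ) * g t := by rw [hdiag t, add_zero, integral_mul_const]
  -- outer integrabilities
  have hout1 : Integrable (fun t => ∫ s, (if s ≤ t then g s * g t else 0) ∂μ) μ := by
    have := hF1.integral_prod_left
    simpa using this
  have hout2 : Integrable (fun t => ∫ s, (if t ≤ s then g s * g t else 0) ∂μ) μ := by
    have := hF2.integral_prod_left
    simpa using this
  set A := ∫ s, g s ∂μ with hA
  have hI : (∫ t, (∫ s, (if s ≤ t then g s * g t else 0) ∂μ) ∂μ)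
      + (∫ t, (∫ s, (if t ≤ s then g s * g t else 0) ∂μ) ∂μ) = A ^ 2 := by
    rw [← integral_add hout1 hout2]
    calc ∫ t, ((∫ s, (if s ≤ t then g s * g t else 0) ∂μ)
          + ∫ s, (if t ≤ s then g s * g t else 0) ∂μ) ∂μ
        = ∫ t, A * g t ∂μ :=
          integral_congr_ae (Filter.Eventually.of_forall fun t => hsum t)
      _ = A * A := by rw [integral_const_mul]
      _ = A ^ 2 := (sq A).symm
  have hswap : (∫ t, (∫ s, (if t ≤ s then g s * g t else 0) ∂μ) ∂μ)
      = ∫ t, (∫ s, (if s ≤ t then g s * g t else 0) ∂μ) ∂μ := by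
    rw [integral_integral_swap (f := fun t s => if t ≤ s then g s * g t else 0)
      (by exact hF2)]
    refine integral_congr_ae (Filter.Eventually.of_forall fun a => ?_)
    refine integral_congr_ae (Filter.Eventually.of_forall fun b => ?_)
    by_cases h : b ≤ a <;> simp [h, mul_comm]
  have hI1 : (∫ t, (∫ s, (if s ≤ t then g s * g t else 0) ∂μ) ∂μ) = A ^ 2 / 2 := by
    rw [hswap] at hI; linarith
  have hcongr : ∀ᵐ t ∂μ, (∫ s, (if s ≤ t then g s * g t else 0) ∂μ)
      = (∫ s in Ioc x t, g s) * g t := by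
    rw [hμ]
    filter_upwards [ae_restrict_mem measurableSet_Ioc] with t ht using hstep1 t ht
  constructor
  · exact hout1.congr hcongr
  · have : (∫ t, (∫ s in Ioc x t, g s) * g t ∂μ)
        = ∫ t, (∫ s, (if s ≤ t then g s * g t else 0) ∂μ) ∂μ :=
      (integral_congr_ae hcongr).symm
    rw [hμ] at this ⊢
    rw [this]
    rw [← hμ, hI1, hA, hμ]

lemma intInt {u' : ℝ → ℝ} (hu' : MemLp u' 2 (volume : Measure ℝ)) (a b : ℝ) :
    IntervalIntegrable u' volume a b := by
  rw [intervalIntegrable_iff]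
  have h : IsFiniteMeasure (volume.restrict (Set.uIoc a b)) :=
    ⟨by rw [Measure.restrict_apply_univ]; exact measure_Ioc_lt_top⟩
  exact (hu'.restrict _).integrable (q := 2) (by norm_num)

lemma ftc_sq {u u' : ℝ → ℝ} (hu' : MemLp u' 2 (volume : Measure ℝ))
    (hac : ∀ x : ℝ, u x = u 0 + ∫ z in (0 : ℝ)..x, u' z)
    {x Y : ℝ} (hxY : x ≤ Y) :
    (u Y) ^ 2 = (u x) ^ 2 + 2 * ∫ t in Ioc x Y, u t * u' t := by
  have hint := intInt hu'
  have hg : IntegrableOn u' (Ioc x Y) := by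
    have := (hint x Y)
    rwa [intervalIntegrable_iff_integrableOn_Ioc_of_le hxY] at this
  obtain ⟨hkey1, hkey2⟩ := key_aux u' hg
  have hux : ∀ t : ℝ, u t = u x + ∫ s in x..t, u' s := by
    intro t
    have h := intervalIntegral.integral_add_adjacent_intervals (hint 0 x) (hint x t)
    rw [hac t, hac x, ← h]; ring
  set A := ∫ s in Ioc x Y, u' s with hA
  have hmain : (∫ t in Ioc x Y, u t * u' t) = u x * A + A ^ 2 / 2 := by
    have hcg : ∀ t ∈ Ioc x Y,
        u t * u' t = u x * u' t + (∫ s in Ioc x t, u' s) * u' t := by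
      intro t ht
      rw [hux t, intervalIntegral.integral_of_le ht.1.le]; ring
    calc (∫ t in Ioc x Y, u t * u' t)
        = ∫ t in Ioc x Y, (u x * u' t + (∫ s in Ioc x t, u' s) * u' t) := by
          refine integral_congr_ae ?_
          filter_upwards [ae_restrict_mem measurableSet_Ioc] with t ht using hcg t ht
      _ = (∫ t in Ioc x Y, u x * u' t) + ∫ t in Ioc x Y, (∫ s in Ioc x t, u' s) * u' t :=
          integral_add (hg.const_mul _) hkey1
      _ = u x * A + A ^ 2 / 2 := by rw [integral_const_mul, hkey2]
  have huY : u Y = u x + A := by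
    rw [hux Y, intervalIntegral.integral_of_le hxY]
  rw [huY, hmain]; ring

/-- If `u ∈ H¹(ℝ)` is absolutely continuous with a.e. derivative
`u' = ξ sin(v/2) cos(v/2)` and `ξ ≥ 0` a.e., then
`sup_Y u²(Y) ≤ ∫ (u² ξ cos²(v/2) + ξ sin²(v/2))`. -/
theorem stmt_13 (u u' ξ v : ℝ → ℝ)
    (hu : MemLp u 2 (volume : Measure ℝ)) (hu' : MemLp u' 2 (volume : Measure ℝ))
    (hac : ∀ x : ℝ, u x = u 0 + ∫ z in (0 : ℝ)..x, u' z)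
    (hξm : Measurable ξ) (hvm : Measurable v)
    (hξ0 : ∀ᵐ Y : ℝ, 0 ≤ ξ Y)
    (hder : ∀ᵐ Y : ℝ, u' Y = ξ Y * Real.sin (v Y / 2) * Real.cos (v Y / 2)) :
    ∀ Y : ℝ, ENNReal.ofReal ((u Y) ^ 2)
      ≤ ∫⁻ Y' : ℝ, ENNReal.ofReal
          ((u Y') ^ 2 * ξ Y' * Real.cos (v Y' / 2) ^ 2
            + ξ Y' * Real.sin (v Y' / 2) ^ 2) := by
  intro Y
  have hint : Integrable (fun t => u t * u' t) (volume : Measure ℝ) := by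
    have h : MemLp (u • u') 1 (volume : Measure ℝ) :=
      hu'.smul hu (hpqr := ⟨by rw [inv_one, ENNReal.inv_two_add_inv_two]⟩)
    exact memLp_one_iff_integrable.mp h
  have habs : Integrable (fun t => |u t * u' t|) (volume : Measure ℝ) := hint.abs
  set C := ∫ t : ℝ, |u t * u' t| with hC
  have hbound : ∀ x : ℝ, x ≤ Y → (u Y) ^ 2 ≤ (u x) ^ 2 + 2 * C := by
    intro x hxY
    rw [ftc_sq hu' hac hxY]
    have h1 : (∫ t in Ioc x Y, u t * u' t) ≤ ∫ t in Ioc x Y, |u t * u' t| :=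
      integral_mono hint.restrict habs.restrict fun t => le_abs_self _
    have h2 : (∫ t in Ioc x Y, |u t * u' t|) ≤ C :=
      setIntegral_le_integral habs (Filter.Eventually.of_forall fun t => abs_nonneg _)
    linarith
  have hsmall : ∀ ε : ℝ, 0 < ε → ∃ x, x ≤ Y ∧ u x ^ 2 < ε := by
    intro ε hε
    by_contra h
    push_neg at h
    have hsub : Iic Y ⊆ {t : ℝ | ε ≤ (fun s => u s ^ 2) t} := fun t ht => h t ht
    have hfin := (hu.integrable_sq).measure_ge_lt_top hε
    have htop : (volume : Measure ℝ) (Iic Y) ≤ volume {t : ℝ | ε ≤ (fun s => u s ^ 2) t} :=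
      measure_mono hsub
    rw [Real.volume_Iic] at htop
    exact absurd (lt_of_le_of_lt htop hfin) (by simp)
  have hle : u Y ^ 2 ≤ 2 * C := by
    refine le_of_forall_pos_le_add fun ε hε => ?_
    obtain ⟨x, hxY, hx⟩ := hsmall ε hε
    have := hbound x hxY
    linarith
  have h2C : ENNReal.ofReal (2 * C) = ∫⁻ t : ℝ, ENNReal.ofReal (2 * |u t * u' t|) := by
    have : (2 : ℝ) * C = ∫ t : ℝ, 2 * |u t * u' t| := by
      rw [hC, ← integral_const_mul]
    rw [this, ofReal_integral_eq_lintegral_ofReal (habs.const_mul 2)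
      (Filter.Eventually.of_forall fun t => by positivity)]
  calc ENNReal.ofReal ((u Y) ^ 2) ≤ ENNReal.ofReal (2 * C) := ENNReal.ofReal_le_ofReal hle
    _ = ∫⁻ t : ℝ, ENNReal.ofReal (2 * |u t * u' t|) := h2C
    _ ≤ ∫⁻ Y' : ℝ, ENNReal.ofReal
          ((u Y') ^ 2 * ξ Y' * Real.cos (v Y' / 2) ^ 2 + ξ Y' * Real.sin (v Y' / 2) ^ 2) := by
      refine lintegral_mono_ae ?_
      filter_upwards [hξ0, hder] with t h1 h2
      refine ENNReal.ofReal_le_ofReal ?_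
      rw [h2]
      have habs' : |u t * (ξ t * Real.sin (v t / 2) * Real.cos (v t / 2))|
          = ξ t * (|u t| * |Real.sin (v t / 2)| * |Real.cos (v t / 2)|) := by
        rw [abs_mul, abs_mul, abs_mul, abs_of_nonneg h1]; ring
      rw [habs']
      have e1 : u t ^ 2 = |u t| ^ 2 := (sq_abs _).symm
      have e2 : Real.sin (v t / 2) ^ 2 = |Real.sin (v t / 2)| ^ 2 := (sq_abs _).symm
      have e3 : Real.cos (v t / 2) ^ 2 = |Real.cos (v t / 2)| ^ 2 := (sq_abs _).symm
      rw [e1, e2, e3]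
      nlinarith [mul_nonneg h1
        (sq_nonneg (|u t| * |Real.cos (v t / 2)| - |Real.sin (v t / 2)|))]
end

section
/- Let w ∈ L¹(ℝ) with w ≥ 0 a.e., and let u ∈ H¹(ℝ) be absolutely continuous with a.e. derivative u' satisfying (u')² = w a.e. Define F : ℝ → ℝ by F(x) = x + ∫_{−∞}^x w(z) dz. Then F is a continuous strictly increasing bijection of ℝ onto ℝ; its inverse β ↦ x(β) is Lipschitz continuous with Lipschitz constant 1; and the map β ↦ u(x(β)) is Lipschitz continuous with Lipschitz constant 1/2. -/
open MeasureTheory Real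

/-- Let `w ∈ L¹(ℝ)` with `w ≥ 0` a.e., and let `u ∈ H¹(ℝ)` be absolutely
continuous with a.e. derivative `u'` satisfying `(u')² = w` a.e. Then
`F(x) = x + ∫_{-∞}^x w` is a continuous strictly increasing bijection of `ℝ`,
its inverse `β ↦ x(β)` is `1`-Lipschitz, and `β ↦ u(x(β))` is `1/2`-Lipschitz. -/
theorem stmt_16 (w u u' : ℝ → ℝ)
    (hw : Integrable w (volume : Measure ℝ)) (hw0 : ∀ᵐ z : ℝ, 0 ≤ w z)
    (hu : MemLp u 2 (volume : Measure ℝ)) (hu' : MemLp u' 2 (volume : Measure ℝ))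
    (hac : ∀ x : ℝ, u x = u 0 + ∫ z in (0 : ℝ)..x, u' z)
    (hw' : ∀ᵐ z : ℝ, (u' z) ^ 2 = w z) :
    Continuous (fun x : ℝ => x + ∫ z in Set.Iio x, w z) ∧
    StrictMono (fun x : ℝ => x + ∫ z in Set.Iio x, w z) ∧
    Function.Bijective (fun x : ℝ => x + ∫ z in Set.Iio x, w z) ∧
    ∃ X : ℝ → ℝ,
      (∀ β : ℝ, X β + ∫ z in Set.Iio (X β), w z = β) ∧
      (∀ x : ℝ, X (x + ∫ z in Set.Iio x, w z) = x) ∧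
      LipschitzWith 1 X ∧
      LipschitzWith (1 / 2) (fun β => u (X β)) := by
  classical
  set G : ℝ → ℝ := fun x => ∫ z in Set.Iio x, w z with hGdef
  set F : ℝ → ℝ := fun x => x + G x with hFdef
  have hwInt : ∀ s : Set ℝ, IntegrableOn w s := fun s => hw.integrableOn
  have hGIic : ∀ x : ℝ, G x = ∫ z in Set.Iic x, w z := fun x => by
    simp only [hGdef]
    rw [Measure.restrict_congr_set Iio_ae_eq_Iic]
  have hGdiff : ∀ x1 x2 : ℝ, G x2 - G x1 = ∫ z in x1..x2, w z := fun x1 x2 => by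
    rw [hGIic, hGIic]
    exact intervalIntegral.integral_Iic_sub_Iic (hwInt _) (hwInt _)
  have hGmono : Monotone G := fun x1 x2 h =>
    setIntegral_mono_set (hwInt _) (ae_restrict_of_ae hw0)
      ((Set.Iio_subset_Iio h).eventuallyLE)
  have hGnn : ∀ x : ℝ, 0 ≤ G x := fun x => setIntegral_nonneg_of_ae hw0
  have hGleC : ∀ x : ℝ, G x ≤ ∫ z, w z := fun x => by
    have := setIntegral_mono_set (s := Set.Iio x) (t := Set.univ) hw.integrableOn
      (ae_restrict_of_ae hw0) ((Set.subset_univ _).eventuallyLE)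
    simpa using this
  -- continuity
  have hFcont : Continuous F := by
    have hprim : Continuous fun x : ℝ => ∫ z in (0:ℝ)..x, w z :=
      intervalIntegral.continuous_primitive (fun a b => hw.intervalIntegrable) 0
    have hGeq : G = fun x => G 0 + ∫ z in (0:ℝ)..x, w z := by
      funext x
      have := hGdiff 0 x
      linarith
    rw [hFdef, hGeq]
    exact continuous_id.add (continuous_const.add hprim)
  -- strict mono
  have hFmono : StrictMono F := fun x1 x2 h => by
    have h2 := hGmono h.le
    simp only [hFdef]
    linarith
  -- surjective
  have hFge : ∀ x, x ≤ F x := fun x => by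
    have := hGnn x
    simp only [hFdef]; linarith
  have hFle : ∀ x, F x ≤ x + ∫ z, w z := fun x => by
    have := hGleC x
    simp only [hFdef]; linarith
  have hsurj : Function.Surjective F :=
    hFcont.surjective
      (Filter.tendsto_atTop_mono hFge Filter.tendsto_id)
      (Filter.tendsto_atBot_mono hFle
        (Filter.tendsto_atBot_add_const_right _ _ Filter.tendsto_id))
  have hbij : Function.Bijective F := ⟨hFmono.injective, hsurj⟩
  -- inverse
  set X : ℝ → ℝ := Function.surjInv hsurj with hXdef
  have hFX : ∀ β, F (X β) = β := fun β => Function.surjInv_eq hsurj β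
  have hXF : ∀ x, X (F x) = x := fun x => hFmono.injective (hFX (F x))
  have hXmono : Monotone X := fun b1 b2 h => by
    by_contra hlt
    push_neg at hlt
    have := hFmono hlt
    rw [hFX, hFX] at this
    exact absurd h (not_le.2 this)
  have hXlip : LipschitzWith 1 X := by
    apply LipschitzWith.of_dist_le_mul
    intro a b
    rcases le_total a b with hab | hab
    · have h1 : X a ≤ X b := hXmono hab
      have ha := hFX a
      have hb := hFX b
      simp only [hFdef] at ha hb
      have h3 := hGmono h1
      have h2 : X b - X a ≤ b - a := by  linarith
      rw [Real.dist_eq, Real.dist_eq, NNReal.coe_one, one_mul, abs_sub_comm (X a),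
        abs_of_nonneg (sub_nonneg.2 h1), abs_sub_comm a, abs_of_nonneg (sub_nonneg.2 hab)]
      exact h2
    · have h1 : X b ≤ X a := hXmono hab
      have ha := hFX a
      have hb := hFX b
      simp only [hFdef] at ha hb
      have h3 := hGmono h1
      have h2 : X a - X b ≤ a - b := by  linarith
      rw [Real.dist_eq, Real.dist_eq, NNReal.coe_one, one_mul,
        abs_of_nonneg (sub_nonneg.2 h1), abs_of_nonneg (sub_nonneg.2 hab)]
      exact h2
  -- half-Lipschitz of u ∘ X
  have hu'sq : Integrable (fun z => (u' z) ^ 2) := hw.congr (hw'.mono fun z h => h.symm)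
  have hgloc : ∀ x1 x2 : ℝ, IntegrableOn (fun z => (1 + (u' z) ^ 2) / 2) (Set.Ioc x1 x2) :=
    fun x1 x2 => by
      apply Integrable.div_const
      exact (integrableOn_const measure_Ioc_lt_top.ne).add hu'sq.integrableOn
  have habs : ∀ z : ℝ, |u' z| ≤ (1 + (u' z) ^ 2) / 2 := fun z => by
    nlinarith [sq_nonneg (|u' z| - 1), sq_abs (u' z), abs_nonneg (u' z)]
  have hu'loc : ∀ x1 x2 : ℝ, IntegrableOn u' (Set.Ioc x1 x2) := fun x1 x2 =>
    Integrable.mono' (hgloc x1 x2) hu'.aestronglyMeasurable.restrict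
      (Filter.Eventually.of_forall fun z => by rw [Real.norm_eq_abs]; exact habs z)
  have hu'ii : ∀ x1 x2 : ℝ, IntervalIntegrable u' volume x1 x2 := fun x1 x2 =>
    ⟨hu'loc _ _, hu'loc _ _⟩
  -- key pointwise bound
  have key : ∀ b1 b2 : ℝ, b1 ≤ b2 → |u (X b2) - u (X b1)| ≤ (b2 - b1) / 2 := by
    intro b1 b2 hb
    set x1 := X b1
    set x2 := X b2
    have h12 : x1 ≤ x2 := hXmono hb
    have hdiff : u x2 - u x1 = ∫ z in Set.Ioc x1 x2, u' z := by
      rw [hac x2, hac x1]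
      have := intervalIntegral.integral_interval_sub_left (hu'ii 0 x2) (hu'ii 0 x1)
      rw [← intervalIntegral.integral_of_le h12, ← this]
      ring
    have hwIoc : ∫ z in Set.Ioc x1 x2, (u' z) ^ 2 = ∫ z in Set.Ioc x1 x2, w z :=
      setIntegral_congr_ae measurableSet_Ioc (hw'.mono fun z h _ => h)
    have hone : ∫ _ in Set.Ioc x1 x2, (1 : ℝ) = x2 - x1 := by
      rw [setIntegral_const, measureReal_def, Real.volume_Ioc, smul_eq_mul, mul_one,
        ENNReal.toReal_ofReal (sub_nonneg.2 h12)]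
    have hbound : |∫ z in Set.Ioc x1 x2, u' z| ≤ ((x2 - x1) + ∫ z in Set.Ioc x1 x2, w z) / 2 := by
      have h1 : |∫ z in Set.Ioc x1 x2, u' z| ≤ ∫ z in Set.Ioc x1 x2, |u' z| := by
        simpa [Real.norm_eq_abs] using
          norm_integral_le_integral_norm (μ := volume.restrict (Set.Ioc x1 x2)) u'
      have h2 : ∫ z in Set.Ioc x1 x2, |u' z| ≤ ∫ z in Set.Ioc x1 x2, (1 + (u' z) ^ 2) / 2 :=
        integral_mono_ae (hu'loc x1 x2).abs (hgloc x1 x2)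
          (Filter.Eventually.of_forall habs)
      have h3 : ∫ z in Set.Ioc x1 x2, (1 + (u' z) ^ 2) / 2
          = ((x2 - x1) + ∫ z in Set.Ioc x1 x2, w z) / 2 := by
        rw [integral_div, integral_add (integrableOn_const (C := (1:ℝ)) (μ := volume) (s := Set.Ioc x1 x2) measure_Ioc_lt_top.ne)
          hu'sq.integrableOn, hone, hwIoc]
      linarith
    have hFsub : b2 - b1 = (x2 - x1) + ∫ z in Set.Ioc x1 x2, w z := by
      have ha := hFX b1
      have hb2 := hFX b2
      simp only [hFdef] at ha hb2
      have hg := hGdiff x1 x2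
      rw [intervalIntegral.integral_of_le h12] at hg
      
      linarith
    rw [hdiff]
    calc |∫ z in Set.Ioc x1 x2, u' z| ≤ ((x2 - x1) + ∫ z in Set.Ioc x1 x2, w z) / 2 := hbound
      _ = (b2 - b1) / 2 := by rw [← hFsub]
  have huXlip : LipschitzWith (1 / 2) (fun β => u (X β)) := by
    apply LipschitzWith.of_dist_le_mul
    intro a b
    have hc : ((1 / 2 : NNReal) : ℝ) = 1 / 2 := by norm_num
    rcases le_total a b with hab | hab
    · rw [Real.dist_eq, Real.dist_eq, hc, abs_sub_comm (u (X a)), abs_sub_comm a,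
        abs_of_nonneg (sub_nonneg.2 hab)]
      have := key a b hab
      linarith
    · rw [Real.dist_eq, Real.dist_eq, hc, abs_of_nonneg (sub_nonneg.2 hab)]
      have := key b a hab
      linarith
  exact ⟨hFcont, hFmono, hbij, X, hFX, hXF, hXlip, huXlip⟩
end
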